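/- arXiv:math/0701925 — 7 statements merged into one kernel-verified Lean document; each statement's English description precedes it below -/
import Mathlib

section
/- Let G be a compact topological group with normalized Haar measure μ and A ⊆ G measurable with 0 < μ(A) ≤ 1. If k = ⌈1/μ(A)⌉, then there exists a subset X ⊆ G with |X| = k such that μ(AX) > 1 - 1/e. -/
open MeasureTheory Pointwise Set
open scoped ENNReal NNReal

section Aux
variable {G : Type*} [Group G] [TopologicalSpace G] [IsTopologicalGroup G]
    [CompactSpace G] [MeasurableSpace G] [BorelSpace G]
    (μ : Measure G) [μ.IsHaarMeasure] [IsProbabilityMeasure μ]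

lemma covering_rightInv_aux : μ.IsMulRightInvariant := by
  constructor
  intro g
  have : IsProbabilityMeasure (Measure.map (· * g) μ) :=
    Measure.isProbabilityMeasure_map (measurable_mul_const g).aemeasurable
  exact Measure.isHaarMeasure_eq_of_isProbabilityMeasure _ μ

lemma covering_step_aux (A : Set G) (hA : MeasurableSet A) (B : Set G) (hB : MeasurableSet B)
    {ε : ℝ} (hε : 0 < ε) :
    ∃ x : G, (μ A).toReal * (μ Bᶜ).toReal - 4 * ε ≤ (μ ((A * {x}) \ B)).toReal := by
  haveI := covering_rightInv_aux μ
  have hint : ∀ h : G → ℝ, Continuous h → Integrable h μ := fun h hh =>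
    hh.integrable_of_hasCompactSupport (isClosed_tsupport h).isCompact
  set ε' : ℝ≥0∞ := ENNReal.ofReal ε with hε'
  have hε'0 : ε' ≠ 0 := by simp [hε', hε]
  have hε't : ε' ≠ ∞ := ENNReal.ofReal_ne_top
  obtain ⟨K, hKA, hKco, hKcl, hKμ⟩ :=
    hA.exists_isCompact_isClosed_diff_lt (measure_ne_top μ A) hε'0
  obtain ⟨L, hLB, hLco, hLcl, hLμ⟩ :=
    hB.compl.exists_isCompact_isClosed_diff_lt (measure_ne_top μ Bᶜ) hε'0
  obtain ⟨V, hKV, hVo, hVμ⟩ := K.exists_isOpen_lt_add (measure_ne_top μ K) hε'0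
  obtain ⟨W, hLW, hWo, hWμ⟩ := L.exists_isOpen_lt_add (measure_ne_top μ L) hε'0
  obtain ⟨f, hf1, hf0, -, hf01⟩ := exists_continuous_one_zero_of_isCompact hKco
    hVo.isClosed_compl (disjoint_compl_right_iff_subset.mpr hKV)
  obtain ⟨g, hg1, hg0, -, hg01⟩ := exists_continuous_one_zero_of_isCompact hLco
    hWo.isClosed_compl (disjoint_compl_right_iff_subset.mpr hLW)
  set c : G → ℝ := fun x => ∫ z, f z * g (z * x) ∂μ with hc
  have hFc : Continuous (Function.uncurry fun (x z : G) => f z * g (z * x)) := by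
    have : (Function.uncurry fun (x z : G) => f z * g (z * x)) =
        fun p : G × G => f p.2 * g (p.2 * p.1) := rfl
    rw [this]; fun_prop
  have c_cont : Continuous c := by
    rw [← continuousOn_univ]
    apply continuousOn_integral_of_compact_support (k := univ) isCompact_univ
      hFc.continuousOn
    intro p x _ hx; exact absurd (mem_univ x) hx
  -- average of c equals (∫ f) * (∫ g)
  have havg : ∫ x, c x ∂μ = (∫ z, f z ∂μ) * (∫ z, g z ∂μ) := by
    rw [hc]
    rw [integral_integral_swap_of_hasCompactSupport hFc
      (isClosed_tsupport _).isCompact]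
    calc ∫ z, ∫ x, f z * g (z * x) ∂μ ∂μ
        = ∫ z, f z * ∫ x, g (z * x) ∂μ ∂μ := by
          congr 1; ext z; exact integral_const_mul _ _
      _ = ∫ z, f z * ∫ x, g x ∂μ ∂μ := by
          congr 1; ext z; rw [integral_mul_left_eq_self (fun y => g y) z]
      _ = (∫ z, f z ∂μ) * (∫ z, g z ∂μ) := integral_mul_const _ _
  -- lower bounds for ∫ f, ∫ g
  have hfK : (μ K).toReal ≤ ∫ z, f z ∂μ := by
    have : ∫ z, K.indicator (fun _ => (1 : ℝ)) z ∂μ ≤ ∫ z, f z ∂μ := by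
      apply integral_mono ((integrable_const (1:ℝ)).indicator hKcl.measurableSet)
        (hint f f.continuous)
      intro z
      by_cases hz : z ∈ K
      · simp [indicator_of_mem hz, hf1 hz]
      · simp only [indicator_of_notMem hz]; exact (hf01 z).1
    rw [integral_indicator_const (1:ℝ) hKcl.measurableSet] at this
    simpa [Measure.real] using this
  have hgL : (μ L).toReal ≤ ∫ z, g z ∂μ := by
    have : ∫ z, L.indicator (fun _ => (1 : ℝ)) z ∂μ ≤ ∫ z, g z ∂μ := by
      apply integral_mono ((integrable_const (1:ℝ)).indicator hLcl.measurableSet)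
        (hint g g.continuous)
      intro z
      by_cases hz : z ∈ L
      · simp [indicator_of_mem hz, hg1 hz]
      · simp only [indicator_of_notMem hz]; exact (hg01 z).1
    rw [integral_indicator_const (1:ℝ) hLcl.measurableSet] at this
    simpa [Measure.real] using this
  have hf_le_one : ∫ z, f z ∂μ ≤ 1 := by
    have : ∫ z, f z ∂μ ≤ ∫ _z, (1:ℝ) ∂μ :=
      integral_mono (hint f f.continuous) (integrable_const _) fun z => (hf01 z).2
    simpa using this
  have hf_nonneg : 0 ≤ ∫ z, f z ∂μ := integral_nonneg fun z => (hf01 z).1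
  have hg_nonneg : 0 ≤ ∫ z, g z ∂μ := integral_nonneg fun z => (hg01 z).1
  -- maximum point of c
  obtain ⟨x₀, -, hx₀⟩ := isCompact_univ.exists_isMaxOn univ_nonempty c_cont.continuousOn
  refine ⟨x₀, ?_⟩
  have hmean : ∫ x, c x ∂μ ≤ c x₀ := by
    have : ∫ x, c x ∂μ ≤ ∫ _x, c x₀ ∂μ :=
      integral_mono (hint c c_cont) (integrable_const _) fun y => hx₀ (mem_univ y)
    simpa using this
  -- pointwise upper bound for c x₀
  set P : Set G := (fun y => y * x₀) ⁻¹' W with hP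
  have hPm : MeasurableSet P := (measurable_mul_const x₀) hWo.measurableSet
  have hcup : c x₀ ≤ (μ (V ∩ P)).toReal := by
    have : c x₀ ≤ ∫ z, (V ∩ P).indicator (fun _ => (1 : ℝ)) z ∂μ := by
      apply integral_mono (hint (fun z => f z * g (z * x₀)) (by fun_prop))
        ((integrable_const (1:ℝ)).indicator (hVo.measurableSet.inter hPm))
      intro z
      by_cases hzV : z ∈ V
      · by_cases hzP : z ∈ P
        · rw [indicator_of_mem (mem_inter hzV hzP)]
          calc f z * g (z * x₀) ≤ 1 * 1 :=
              mul_le_mul (hf01 z).2 (hg01 _).2 (hg01 _).1 zero_le_one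
            _ = 1 := one_mul 1
        · have hgz : g (z * x₀) = 0 := hg0 hzP
          show f z * g (z * x₀) ≤ (V ∩ P).indicator (fun _ => (1:ℝ)) z
          rw [hgz, mul_zero]
          exact indicator_nonneg (fun _ _ => zero_le_one) z
      · have hfz : f z = 0 := hf0 hzV
        show f z * g (z * x₀) ≤ (V ∩ P).indicator (fun _ => (1:ℝ)) z
        rw [hfz, zero_mul]
        exact indicator_nonneg (fun _ _ => zero_le_one) z
    rw [integral_indicator_const (1:ℝ) (hVo.measurableSet.inter hPm)] at this
    simpa [Measure.real] using this
  -- measure-theoretic comparison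
  have hsub : V ∩ P ⊆ ((A ∩ ((fun y => y * x₀) ⁻¹' Bᶜ)) ∪ (V \ K)) ∪
      ((fun y => y * x₀) ⁻¹' (W \ L)) := by
    rintro z ⟨hzV, hzP⟩
    by_cases hzK : z ∈ K
    · by_cases hzL : z * x₀ ∈ L
      · exact Or.inl (Or.inl ⟨hKA hzK, hLB hzL⟩)
      · exact Or.inr ⟨hzP, hzL⟩
    · exact Or.inl (Or.inr ⟨hzV, hzK⟩)
  have hVK : μ (V \ K) < ε' :=
    measure_diff_lt_of_lt_add hKcl.nullMeasurableSet hKV (measure_ne_top μ K) hVμ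
  have hWL : μ (W \ L) < ε' :=
    measure_diff_lt_of_lt_add hLcl.nullMeasurableSet hLW (measure_ne_top μ L) hWμ
  have hkey : μ ((A * {x₀}) \ B) = μ (A ∩ ((fun y => y * x₀) ⁻¹' Bᶜ)) := by
    have hset : (fun y => y * x₀) ⁻¹' ((A * {x₀}) \ B) =
        A ∩ ((fun y => y * x₀) ⁻¹' Bᶜ) := by
      ext y
      simp only [mem_preimage, mem_diff, mem_inter_iff, mem_compl_iff, Set.mul_singleton,
        mem_image, mul_left_inj, exists_eq_right]
    rw [← measure_preimage_mul_right μ x₀ ((A * {x₀}) \ B), hset]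
  have hμVP : μ (V ∩ P) ≤ μ ((A * {x₀}) \ B) + ε' + ε' := by
    calc μ (V ∩ P) ≤ μ (((A ∩ ((fun y => y * x₀) ⁻¹' Bᶜ)) ∪ (V \ K)) ∪
        ((fun y => y * x₀) ⁻¹' (W \ L))) := measure_mono hsub
      _ ≤ (μ (A ∩ ((fun y => y * x₀) ⁻¹' Bᶜ)) + μ (V \ K)) +
          μ ((fun y => y * x₀) ⁻¹' (W \ L)) :=
        le_trans (measure_union_le _ _) (add_le_add_left (measure_union_le _ _) _)
      _ = (μ ((A * {x₀}) \ B) + μ (V \ K)) + μ (W \ L) := by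
          rw [hkey, measure_preimage_mul_right]
      _ ≤ μ ((A * {x₀}) \ B) + ε' + ε' :=
        add_le_add (add_le_add_right hVK.le _) hWL.le
  -- convert everything to reals
  have hKreal : (μ A).toReal - ε ≤ (μ K).toReal := by
    have h1 : μ A ≤ μ K + ε' := by
      calc μ A ≤ μ (K ∪ (A \ K)) := measure_mono (by
        intro z hz; by_cases h : z ∈ K; exacts [Or.inl h, Or.inr ⟨hz, h⟩])
        _ ≤ μ K + μ (A \ K) := measure_union_le _ _
        _ ≤ μ K + ε' := add_le_add_right hKμ.le _
    have := ENNReal.toReal_mono (by finiteness) h1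
    rw [ENNReal.toReal_add (measure_ne_top μ K) hε't, ENNReal.toReal_ofReal hε.le] at this
    linarith
  have hLreal : (μ Bᶜ).toReal - ε ≤ (μ L).toReal := by
    have h1 : μ Bᶜ ≤ μ L + ε' := by
      calc μ Bᶜ ≤ μ (L ∪ (Bᶜ \ L)) := measure_mono (by
        intro z hz; by_cases h : z ∈ L; exacts [Or.inl h, Or.inr ⟨hz, h⟩])
        _ ≤ μ L + μ (Bᶜ \ L) := measure_union_le _ _
        _ ≤ μ L + ε' := add_le_add_right hLμ.le _
    have := ENNReal.toReal_mono (by finiteness) h1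
    rw [ENNReal.toReal_add (measure_ne_top μ L) hε't, ENNReal.toReal_ofReal hε.le] at this
    linarith
  have hVPreal : (μ (V ∩ P)).toReal ≤ (μ ((A * {x₀}) \ B)).toReal + ε + ε := by
    have := ENNReal.toReal_mono (by finiteness) hμVP
    rwa [ENNReal.toReal_add (by finiteness) hε't, ENNReal.toReal_add (by finiteness) hε't,
      ENNReal.toReal_ofReal hε.le] at this
  -- final arithmetic
  set a := (μ A).toReal
  set b := (μ Bᶜ).toReal
  set p := ∫ z, f z ∂μ
  set q := ∫ z, g z ∂μ
  have ha1 : a ≤ 1 := by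
    have := prob_le_one (μ := μ) (s := A); exact ENNReal.toReal_le_of_le_ofReal zero_le_one (by simpa)
  have hb1 : b ≤ 1 := by
    have := prob_le_one (μ := μ) (s := Bᶜ); exact ENNReal.toReal_le_of_le_ofReal zero_le_one (by simpa)
  have ha0 : 0 ≤ a := ENNReal.toReal_nonneg
  have hb0 : 0 ≤ b := ENNReal.toReal_nonneg
  have hpa : a - ε ≤ p := le_trans hKreal hfK
  have hqb : b - ε ≤ q := le_trans hLreal hgL
  have hchain : p * q ≤ (μ ((A * {x₀}) \ B)).toReal + ε + ε := by
    calc p * q = ∫ x, c x ∂μ := havg.symm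
      _ ≤ c x₀ := hmean
      _ ≤ (μ (V ∩ P)).toReal := hcup
      _ ≤ _ := hVPreal
  have hg_le_one : q ≤ 1 := by
    have : ∫ z, g z ∂μ ≤ ∫ _z, (1:ℝ) ∂μ :=
      integral_mono (hint g g.continuous) (integrable_const _) fun z => (hg01 z).2
    simpa using this
  have h1 : a * (b - q) ≤ a * ε := mul_le_mul_of_nonneg_left (by linarith) ha0
  have h2 : q * (a - p) ≤ q * ε := mul_le_mul_of_nonneg_left (by linarith) hg_nonneg
  have h3 : a * ε ≤ 1 * ε := mul_le_mul_of_nonneg_right ha1 hε.le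
  have h4 : q * ε ≤ 1 * ε := mul_le_mul_of_nonneg_right hg_le_one hε.le
  nlinarith [h1, h2, h3, h4, hchain]

end Aux



/-- For a compact group `G` with normalized Haar measure `μ` and measurable `A` with
`0 < μ A ≤ 1`, taking `k = ⌈1/μ(A)⌉` there is a `k`-element set `X` with
`μ(AX) > 1 - 1/e`. -/
theorem covering_lemma_e {G : Type*} [Group G] [TopologicalSpace G] [IsTopologicalGroup G]
    [CompactSpace G] [MeasurableSpace G] [BorelSpace G]
    (μ : Measure G) [μ.IsHaarMeasure] [IsProbabilityMeasure μ]
    (A : Set G) (hA : MeasurableSet A) (hpos : 0 < μ A) (hle : μ A ≤ 1)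
    (k : ℕ) (hk : k = ⌈1 / (μ A).toReal⌉₊) :
    ∃ X : Finset G, X.card = k ∧
      1 - 1 / Real.exp 1 < (μ (A * (X : Set G))).toReal := by
  classical
  haveI := covering_rightInv_aux μ
  set t := (μ A).toReal with ht
  have ht0 : 0 < t := ENNReal.toReal_pos hpos.ne' (measure_ne_top μ A)
  have ht1 : t ≤ 1 := by
    have := ENNReal.toReal_mono ENNReal.one_ne_top hle
    simpa using this
  have hmulm : ∀ X : Finset G, MeasurableSet (A * (X : Set G)) := by
    intro X
    have hrw : A * (X : Set G) = ⋃ x ∈ X, (fun y => y * x⁻¹) ⁻¹' A := by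
      ext y
      constructor
      · rintro ⟨a, ha, x, hx, rfl⟩
        exact mem_biUnion hx (by simpa using ha)
      · intro hy
        obtain ⟨x, hx, hyx⟩ := mem_iUnion₂.mp hy
        exact ⟨y * x⁻¹, hyx, x, hx, by group⟩
    rw [hrw]
    exact X.measurableSet_biUnion fun x _ => (measurable_mul_const x⁻¹) hA
  have htoReal_le_one : ∀ S : Set G, (μ S).toReal ≤ 1 := fun S =>
    ENNReal.toReal_le_of_le_ofReal zero_le_one (by simpa using prob_le_one (μ := μ) (s := S))
  have hcompl : ∀ S : Set G, MeasurableSet S → (μ Sᶜ).toReal = 1 - (μ S).toReal := by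
    intro S hS
    rw [measure_compl hS (measure_ne_top μ S), measure_univ,
      ENNReal.toReal_sub_of_le (prob_le_one) ENNReal.one_ne_top, ENNReal.toReal_one]
  rcases eq_or_lt_of_le ht1 with hteq | htlt
  · -- t = 1
    refine ⟨{1}, ?_, ?_⟩
    · rw [hk, hteq]; norm_num
    · have hAe : A * (({1} : Finset G) : Set G) = A := by simp
      have hA1 : (μ A).toReal = 1 := ht.symm.trans hteq
      rw [hAe, hA1]
      have : 0 < 1 / Real.exp 1 := by positivity
      linarith
  -- now t < 1
  have h1t0 : 0 < 1 - t := by linarith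
  have hkt : 1 / t ≤ (k : ℝ) := hk ▸ Nat.le_ceil _
  have hk1 : 1 ≤ k := by
    rw [hk]
    exact Nat.one_le_ceil_iff.mpr (by positivity)
  have hek : (1 - t) ^ k < Real.exp (-1) := by
    have hlog : Real.log (1 - t) < -t := by
      have := Real.log_lt_sub_one_of_pos h1t0 (by linarith)
      linarith
    have hlogneg : Real.log (1 - t) < 0 := by
      have := Real.log_neg h1t0 (by linarith)
      linarith
    have h1 : (k : ℝ) * Real.log (1 - t) ≤ (1 / t) * Real.log (1 - t) :=
      mul_le_mul_of_nonpos_right hkt hlogneg.le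
    have h2 : (1 / t) * Real.log (1 - t) < (1 / t) * (-t) :=
      (mul_lt_mul_iff_right₀ (by positivity)).mpr hlog
    have h3 : (1 / t) * (-t) = -1 := by field_simp
    have h4 : (k : ℝ) * Real.log (1 - t) < -1 := by linarith
    calc (1 - t) ^ k = Real.exp (Real.log ((1 - t) ^ k)) :=
          (Real.exp_log (pow_pos h1t0 k)).symm
      _ = Real.exp ((k : ℝ) * Real.log (1 - t)) := by rw [Real.log_pow]
      _ < Real.exp (-1) := Real.exp_lt_exp.mpr h4
  set δ : ℝ := min (t * (1 - t) ^ k) ((Real.exp (-1) - (1 - t) ^ k) / (2 * k)) with hδ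
  have hδ0 : 0 < δ := by
    apply lt_min
    · positivity
    · have : 0 < Real.exp (-1) - (1 - t) ^ k := by linarith
      have hk0 : 0 < (k : ℝ) := by exact_mod_cast hk1
      positivity
  -- fresh element
  have fresh : ∀ X : Finset G, X.card < k → ∃ x, x ∉ X := by
    intro X hX
    cases finite_or_infinite G with
    | inl hfin =>
      haveI := Fintype.ofFinite G
      obtain ⟨a₀, ha₀⟩ := nonempty_of_measure_ne_zero hpos.ne'
      have hcover : (univ : Set G) ⊆ ⋃ g ∈ (Finset.univ : Finset G),
          (fun y => y * g⁻¹) ⁻¹' A := by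
        intro y _
        refine mem_biUnion (Finset.mem_univ (a₀⁻¹ * y)) ?_
        show y * (a₀⁻¹ * y)⁻¹ ∈ A
        have : y * (a₀⁻¹ * y)⁻¹ = a₀ := by group
        rwa [this]
      have hcard : (1 : ℝ≥0∞) ≤ (Fintype.card G : ℝ≥0∞) * μ A := by
        calc (1 : ℝ≥0∞) = μ univ := measure_univ.symm
          _ ≤ μ (⋃ g ∈ (Finset.univ : Finset G), (fun y => y * g⁻¹) ⁻¹' A) :=
            measure_mono hcover
          _ ≤ ∑ g ∈ (Finset.univ : Finset G), μ ((fun y => y * g⁻¹) ⁻¹' A) :=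
            measure_biUnion_finset_le _ _
          _ = ∑ _g ∈ (Finset.univ : Finset G), μ A := by
            apply Finset.sum_congr rfl
            intro g _
            exact measure_preimage_mul_right μ g⁻¹ A
          _ = (Fintype.card G : ℝ≥0∞) * μ A := by
            rw [Finset.sum_const, Finset.card_univ, nsmul_eq_mul]
      have hreal : (1 : ℝ) ≤ (Fintype.card G : ℝ) * t := by
        have h1 := ENNReal.toReal_mono (by finiteness) hcard
        rwa [ENNReal.toReal_one, ENNReal.toReal_mul, ENNReal.toReal_natCast] at h1
      have hkn : k ≤ Fintype.card G := by
        rw [hk]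
        apply Nat.ceil_le.mpr
        rw [div_le_iff₀ ht0]
        linarith
      have hXcard : X.card < Fintype.card G := lt_of_lt_of_le hX hkn
      by_contra h
      push_neg at h
      have : X = Finset.univ := Finset.eq_univ_iff_forall.mpr h
      rw [this, Finset.card_univ] at hXcard
      exact lt_irrefl _ hXcard
    | inr hinf => exact Infinite.exists_notMem_finset X
  -- main induction
  have main : ∀ j, j ≤ k → ∃ X : Finset G, X.card = j ∧
      1 - (μ (A * (X : Set G))).toReal ≤ (1 - t) ^ j + j * δ := by
    intro j
    induction j with
    | zero =>
      intro _
      refine ⟨∅, Finset.card_empty, ?_⟩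
      simp
    | succ j ih =>
      intro hj
      obtain ⟨X, hXcard, hXle⟩ := ih (Nat.le_of_succ_le hj)
      set B := A * (X : Set G) with hB
      have hBm : MeasurableSet B := hmulm X
      set m := (μ B).toReal with hm
      have hm1 : m ≤ 1 := htoReal_le_one B
      obtain ⟨x, hx⟩ := covering_step_aux μ A hA B hBm (ε := δ / 4) (by positivity)
      rw [hcompl B hBm] at hx
      set d := (μ ((A * {x}) \ B)).toReal with hd
      have hd0 : 0 ≤ d := ENNReal.toReal_nonneg
      have hxd : t * (1 - m) - δ ≤ d := by
        rw [← ht, ← hm] at hx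
        linarith
      by_cases hdpos : 0 < d
      · have hxX : x ∉ X := by
          intro hxX
          have hsub : A * {x} ⊆ B := by
            rw [hB]
            exact mul_subset_mul_left (by simpa using hxX)
          have hempty : (A * {x}) \ B = ∅ := diff_eq_empty.mpr hsub
          rw [hd, hempty] at hdpos
          simp at hdpos
        refine ⟨insert x X, by rw [Finset.card_insert_of_notMem hxX, hXcard], ?_⟩
        have hset : A * ((insert x X : Finset G) : Set G) = B ∪ A * {x} := by
          rw [Finset.coe_insert, Set.insert_eq, Set.mul_union, hB]
          exact union_comm _ _
        have hAxm : MeasurableSet (A * ({x} : Set G)) := by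
          have : A * ({x} : Set G) = (fun y => y * x⁻¹) ⁻¹' A := by
            ext y
            simp only [Set.mul_singleton, mem_image, mem_preimage]
            constructor
            · rintro ⟨a, ha, rfl⟩; simpa using ha
            · intro hy; exact ⟨y * x⁻¹, hy, by group⟩
          rw [this]
          exact (measurable_mul_const x⁻¹) hA
        have hmeas : μ (B ∪ A * {x}) = μ B + μ ((A * {x}) \ B) := by
          rw [← union_diff_self, measure_union disjoint_sdiff_self_right (hAxm.diff hBm)]
        have hmreal : (μ (A * ((insert x X : Finset G) : Set G))).toReal = m + d := by
          rw [hset, hmeas, ENNReal.toReal_add (measure_ne_top _ _) (measure_ne_top _ _),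
            ← hm, ← hd]
        rw [hmreal]
        have e1 : (1 - t) * (1 - m) ≤ (1 - t) * ((1 - t) ^ j + j * δ) :=
          mul_le_mul_of_nonneg_left hXle h1t0.le
        have e2 : (1 - t) * ((j : ℝ) * δ) ≤ (j : ℝ) * δ := by
          apply mul_le_of_le_one_left (by positivity)
          linarith
        have epow : (1 - t) ^ (j + 1) = (1 - t) ^ j * (1 - t) := pow_succ _ _
        push_cast
        nlinarith [e1, e2, hxd, epow]
      · have hdz : d = 0 := le_antisymm (not_lt.mp hdpos) hd0
        have h1 : t * (1 - m) ≤ δ := by linarith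
        have h2 : δ ≤ t * (1 - t) ^ k := min_le_left _ _
        have h3 : 1 - m ≤ (1 - t) ^ k := by
          have := le_trans h1 h2
          exact le_of_mul_le_mul_left this ht0
        have h4 : 1 - m ≤ (1 - t) ^ (j + 1) :=
          le_trans h3 (pow_le_pow_of_le_one h1t0.le (by linarith) hj)
        obtain ⟨x', hx'⟩ := fresh X (by omega)
        refine ⟨insert x' X, by rw [Finset.card_insert_of_notMem hx', hXcard], ?_⟩
        have hmono : μ B ≤ μ (A * ((insert x' X : Finset G) : Set G)) := by
          apply measure_mono
          rw [hB]
          apply mul_subset_mul_left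
          rw [Finset.coe_insert]
          exact subset_insert _ _
        have hmr : m ≤ (μ (A * ((insert x' X : Finset G) : Set G))).toReal :=
          ENNReal.toReal_mono (measure_ne_top _ _) hmono
        have hjd : 0 ≤ ((j : ℝ) + 1) * δ := by positivity
        push_cast [Finset.coe_insert] at hmr ⊢
        linarith
  obtain ⟨X, hXcard, hXle⟩ := main k le_rfl
  refine ⟨X, hXcard, ?_⟩
  have hkδ : (k : ℝ) * δ ≤ (Real.exp (-1) - (1 - t) ^ k) / 2 := by
    have h2 : δ ≤ (Real.exp (-1) - (1 - t) ^ k) / (2 * k) := min_le_right _ _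
    have hk0 : 0 < (k : ℝ) := by exact_mod_cast hk1
    calc (k : ℝ) * δ ≤ (k : ℝ) * ((Real.exp (-1) - (1 - t) ^ k) / (2 * k)) :=
          mul_le_mul_of_nonneg_left h2 hk0.le
      _ = (Real.exp (-1) - (1 - t) ^ k) / 2 := by field_simp
  have hexp : 1 / Real.exp 1 = Real.exp (-1) := by
    rw [Real.exp_neg, one_div]
  rw [hexp]
  linarith
end

section
/- Let Γ be a finitely generated group, d = d(Γ), and suppose Γ has a sequence of finite normal subgroups Aᵢ with |Aᵢ| → ∞. Then for any chain (Γⱼ) of finite index subgroups of Γ with trivial intersection, RG(Γ,(Γⱼ)) = 0. -/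
open Filter

/-- `d G` is the minimal number of generators of the group `G`. -/
noncomputable def d (G : Type*) [Group G] : ℕ :=
  sInf {n | ∃ S : Finset G, S.card = n ∧ Subgroup.closure (S : Set G) = ⊤}

lemma d_eq_rank (G : Type*) [Group G] [Group.FG G] : d G = Group.rank G := by
  have hne : {n | ∃ S : Finset G, S.card = n ∧ Subgroup.closure (S : Set G) = ⊤}.Nonempty := by
    obtain ⟨S, hS1, hS2⟩ := Group.rank_spec G
    exact ⟨S.card, S, rfl, hS2⟩
  apply le_antisymm
  · obtain ⟨S, hS1, hS2⟩ := Group.rank_spec G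
    exact Nat.sInf_le ⟨S, hS1, hS2⟩
  · obtain ⟨S, hS1, hS2⟩ := Nat.sInf_mem hne
    have h := Group.rank_le hS2
    rw [hS1] at h
    exact h

lemma one_le_rank (G : Type*) [Group G] [Group.FG G] [Infinite G] : 1 ≤ Group.rank G := by
  by_contra h
  push_neg at h
  rw [Nat.lt_one_iff] at h
  obtain ⟨S, hS1, hS2⟩ := Group.rank_spec G
  rw [h, Finset.card_eq_zero] at hS1
  subst hS1
  simp only [Finset.coe_empty, Subgroup.closure_empty] at hS2
  have hall : ∀ a : G, a = 1 := fun a =>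
    Subgroup.mem_bot.mp (hS2 ▸ Subgroup.mem_top a)
  obtain ⟨a, b, hab⟩ := exists_pair_ne G
  exact hab ((hall a).trans (hall b).symm)

/-- The key inequality: if `A` is a finite normal subgroup with `A ⊓ H = ⊥` and
`H` has finite index, then `rank H * |A| ≤ rank Γ * [Γ : H]`. -/
lemma rank_mul_card_le {Γ : Type*} [Group Γ] [Group.FG Γ] (A H : Subgroup Γ) [A.Normal]
    [Finite A] [hHfi : H.FiniteIndex] (hAH : A ⊓ H = ⊥) :
    Group.rank H * Nat.card A ≤ Group.rank Γ * H.index := by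
  set K := H ⊔ A with hKdef
  have hHK : H ≤ K := le_sup_left
  have hrel : H.relIndex K * K.index = H.index := Subgroup.relIndex_mul_index hHK
  haveI hKfi : K.FiniteIndex := by
    constructor
    intro h0
    exact hHfi.index_ne_zero (by rw [← hrel, h0, mul_zero])
  haveI : Group.FG K := Subgroup.fg_of_index_ne_zero K
  haveI : Group.FG H := Subgroup.fg_of_index_ne_zero H
  -- rank H ≤ rank K via the second isomorphism theorem
  have hsub : A.subgroupOf H = ⊥ := by
    rw [Subgroup.subgroupOf_eq_bot]
    exact disjoint_iff.mpr hAH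
  have e : K ⧸ A.subgroupOf K ≃* H :=
    ((QuotientGroup.quotientInfEquivProdNormalQuotient H A).symm.trans
      (QuotientGroup.quotientMulEquivOfEq hsub)).trans QuotientGroup.quotientBot
  haveI : Group.FG (K ⧸ A.subgroupOf K) :=
    Group.fg_of_surjective (QuotientGroup.mk'_surjective (A.subgroupOf K))
  have hrankH : Group.rank H ≤ Group.rank K := by
    calc Group.rank H ≤ Group.rank (K ⧸ A.subgroupOf K) :=
          Group.rank_le_of_surjective e.toMonoidHom e.surjective
    _ ≤ Group.rank K :=
          Group.rank_le_of_surjective _ (QuotientGroup.mk'_surjective (A.subgroupOf K))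
  have hrankK : Group.rank K ≤ K.index * Group.rank Γ := Subgroup.rank_le_index_mul_rank K
  -- |A| ≤ [K : H]
  have hrelne : H.relIndex K ≠ 0 := by
    intro h0
    exact hHfi.index_ne_zero (by rw [← hrel, h0, zero_mul])
  haveI hfinq : Finite (K ⧸ H.subgroupOf K) := Nat.finite_of_card_ne_zero hrelne
  have hcard : Nat.card A ≤ H.relIndex K := by
    have hinj : Function.Injective
        (fun a : A => (QuotientGroup.mk ⟨(a : Γ), (le_sup_right : A ≤ K) a.2⟩ : K ⧸ H.subgroupOf K)) := by
      intro a b hab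
      have := QuotientGroup.eq.mp hab
      simp only [Subgroup.mem_subgroupOf] at this
      have hmem : (a : Γ)⁻¹ * (b : Γ) ∈ A ⊓ H :=
        Subgroup.mem_inf.mpr ⟨A.mul_mem (A.inv_mem a.2) b.2, this⟩
      rw [hAH, Subgroup.mem_bot] at hmem
      have : (a : Γ) = (b : Γ) := by
        have := inv_mul_eq_one.mp hmem
        exact this
      exact Subtype.ext this
    exact Nat.card_le_card_of_injective _ hinj
  calc Group.rank H * Nat.card A ≤ (K.index * Group.rank Γ) * (H.relIndex K) :=
        Nat.mul_le_mul (hrankH.trans hrankK) hcard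
  _ = Group.rank Γ * (H.relIndex K * K.index) := by ring
  _ = Group.rank Γ * H.index := by rw [hrel]

/-- If a finitely generated group `Γ` has finite normal subgroups `Aᵢ` with
`|Aᵢ| → ∞`, then the rank gradient of `Γ` with respect to any chain of finite index
subgroups with trivial intersection is zero. -/
theorem rank_gradient_zero_of_finite_normal_subgroups {Γ : Type*} [Group Γ] [Group.FG Γ]
    (A : ℕ → Subgroup Γ) (hAnorm : ∀ i, (A i).Normal) (hAfin : ∀ i, Finite (A i))
    (hAcard : Tendsto (fun i => Nat.card (A i)) atTop atTop)
    (Γc : ℕ → Subgroup Γ) (hchain : ∀ j, Γc (j + 1) ≤ Γc j)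
    (hfi : ∀ j, (Γc j).FiniteIndex) (hint : (⨅ j, Γc j) = ⊥) :
    Tendsto (fun j => ((d (Γc j) : ℝ) - 1) / (Γc j).index) atTop (nhds 0) := by
  have hanti : Antitone Γc := antitone_nat_of_succ_le hchain
  -- Γ is infinite
  haveI hΓinf : Infinite Γ := by
    rw [← not_finite_iff_infinite]
    intro hfin
    haveI : Finite Γ := hfin
    obtain ⟨i, hi⟩ := (hAcard.eventually_gt_atTop (Nat.card Γ)).exists
    have : Nat.card (A i) ≤ Nat.card Γ :=
      Nat.card_le_card_of_injective ((A i).subtype) (A i).subtype_injective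
    omega
  -- each Γc j is infinite
  have hΓcinf : ∀ j, Infinite (Γc j) := by
    intro j
    rw [← not_finite_iff_infinite]
    intro hfin
    have hcard : Nat.card (Γc j) * (Γc j).index = Nat.card Γ := Subgroup.card_mul_index (Γc j)
    have h1 : Nat.card (Γc j) ≠ 0 := Nat.card_ne_zero.mpr ⟨⟨1, (Γc j).one_mem⟩, hfin⟩
    have h2 : (Γc j).index ≠ 0 := (hfi j).index_ne_zero
    have h3 : Nat.card Γ = 0 := Nat.card_eq_zero_of_infinite
    rw [h3] at hcard
    exact (Nat.mul_ne_zero h1 h2) hcard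
  rw [Metric.tendsto_atTop]
  intro ε hε
  -- choose M with (d Γ : ℝ) < ε * M
  obtain ⟨M₀, hM₀⟩ := exists_nat_gt ((Group.rank Γ : ℝ) / ε)
  set M := M₀ + 1 with hMdef
  have hMpos : 0 < M := Nat.succ_pos _
  have hM : (Group.rank Γ : ℝ) < ε * M := by
    have h1 : (Group.rank Γ : ℝ) / ε < M := lt_of_lt_of_le hM₀ (by exact_mod_cast Nat.le_succ M₀)
    calc (Group.rank Γ : ℝ) = (Group.rank Γ : ℝ) / ε * ε := by field_simp
    _ < (M : ℝ) * ε := by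
        apply mul_lt_mul_of_pos_right h1 hε
    _ = ε * M := mul_comm _ _
  -- choose i with |A i| ≥ M
  obtain ⟨i, hi⟩ := (hAcard.eventually_ge_atTop M).exists
  haveI := hAfin i
  haveI := hAnorm i
  -- find N with A i ⊓ Γc j = ⊥ for j ≥ N
  have hT : ∀ x : Γ, x ∈ A i → x ≠ 1 → ∃ j, x ∉ Γc j := by
    intro x hx hx1
    by_contra h
    push_neg at h
    have hmem : x ∈ ⨅ j, Γc j := Subgroup.mem_iInf.mpr h
    rw [hint, Subgroup.mem_bot] at hmem
    exact hx1 hmem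
  classical
  have hAfinset : ((A i : Set Γ)).Finite := Set.toFinite _
  set g : Γ → ℕ := fun x => if h : ∃ j, x ∉ Γc j then Nat.find h else 0 with hg
  set N := hAfinset.toFinset.sup g with hN
  have hbot : ∀ j, N ≤ j → A i ⊓ Γc j = ⊥ := by
    intro j hj
    rw [eq_bot_iff]
    intro x hx
    obtain ⟨hx1, hx2⟩ := hx
    rw [Subgroup.mem_bot]
    by_contra hxne
    have hex : ∃ k, x ∉ Γc k := hT x hx1 hxne
    have hgx : g x = Nat.find hex := by simp [hg, dif_pos hex]
    have hspec : x ∉ Γc (Nat.find hex) := Nat.find_spec hex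
    have hle : g x ≤ N := Finset.le_sup (hAfinset.mem_toFinset.mpr hx1)
    have : Γc j ≤ Γc (Nat.find hex) := hanti (by omega)
    exact hspec (this hx2)
  refine ⟨N, fun j hj => ?_⟩
  -- the main estimate
  haveI := hfi j
  haveI : Group.FG (Γc j) := Subgroup.fg_of_index_ne_zero (Γc j)
  haveI := hΓcinf j
  have hkey : Group.rank (Γc j) * Nat.card (A i) ≤ Group.rank Γ * (Γc j).index :=
    rank_mul_card_le (A i) (Γc j) (hbot j hj)
  have hd : d (Γc j) = Group.rank (Γc j) := d_eq_rank _
  have hind : (0 : ℝ) < (Γc j).index := by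
    exact_mod_cast Nat.pos_of_ne_zero (hfi j).index_ne_zero
  have hd1 : 1 ≤ Group.rank (Γc j) := one_le_rank _
  have hnonneg : (0 : ℝ) ≤ ((d (Γc j) : ℝ) - 1) / (Γc j).index := by
    apply div_nonneg _ (le_of_lt hind)
    rw [hd]
    have : (1 : ℝ) ≤ Group.rank (Γc j) := by exact_mod_cast hd1
    linarith
  rw [Real.dist_eq, sub_zero, abs_of_nonneg hnonneg]
  -- show (d - 1)/index < ε
  rw [div_lt_iff₀ hind, hd]
  have hcardA : (0 : ℝ) < Nat.card (A i) := by
    have : 0 < Nat.card (A i) := lt_of_lt_of_le hMpos hi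
    exact_mod_cast this
  have h1 : (Group.rank (Γc j) : ℝ) * Nat.card (A i) ≤ (Group.rank Γ : ℝ) * (Γc j).index := by
    exact_mod_cast hkey
  have h2 : (Group.rank Γ : ℝ) * (Γc j).index < (ε * M) * (Γc j).index :=
    mul_lt_mul_of_pos_right hM hind
  have h3 : (ε * M) * (Γc j).index ≤ (ε * Nat.card (A i)) * (Γc j).index := by
    apply mul_le_mul_of_nonneg_right _ (le_of_lt hind)
    apply mul_le_mul_of_nonneg_left _ (le_of_lt hε)
    exact_mod_cast hi
  have h4 : (Group.rank (Γc j) : ℝ) * Nat.card (A i) <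
      (ε * (Γc j).index) * Nat.card (A i) := by
    calc (Group.rank (Γc j) : ℝ) * Nat.card (A i)
        ≤ (Group.rank Γ : ℝ) * (Γc j).index := h1
      _ < (ε * M) * (Γc j).index := h2
      _ ≤ (ε * Nat.card (A i)) * (Γc j).index := h3
      _ = (ε * (Γc j).index) * Nat.card (A i) := by ring
  have h5 : (Group.rank (Γc j) : ℝ) < ε * (Γc j).index :=
    lt_of_mul_lt_mul_right h4 (le_of_lt hcardA)
  linarith
end

section
/- Let Γ be a group generated by d elements, and let N be a ℤΓ-module generated by t elements. Suppose N₀ ≤ N is a ℤΓ-submodule of finite index b (as abelian groups). Then N₀ can be generated by at most t + (2d+1)·log₂(b) elements as a ℤΓ-module. -/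
open Submodule MonoidAlgebra

theorem fp_coords {V : Type*} [AddCommGroup V] [Finite V] (p : ℕ) [Fact p.Prime]
    [Module (ZMod p) V] :
    ∃ r : ℕ, Nat.card V = p ^ r ∧
      ∃ (v : Fin r → V) (c : V → Fin r → ℤ),
        (∀ x, ∑ j, c x j • v j = x) ∧
        (∀ g : Fin r → ℤ, (∑ j, g j • v j) = 0 → ∀ j, (p : ℤ) ∣ g j) := by
  haveI : Fintype V := Fintype.ofFinite _
  refine ⟨Module.finrank (ZMod p) V, ?_, ?_⟩
  · rw [Nat.card_eq_fintype_card, Module.card_eq_pow_finrank (K := ZMod p), ZMod.card]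
  obtain bV := Module.finBasis (ZMod p) V
  refine ⟨fun j => bV j, fun x j => ((bV.repr x) j).val, ?_, ?_⟩
  · intro x
    calc ∑ j, (((bV.repr x) j).val : ℤ) • bV j
        = ∑ j, ((((bV.repr x) j).val : ℤ) : ZMod p) • bV j := by
          simp_rw [Int.cast_smul_eq_zsmul]
      _ = ∑ j, ((bV.repr x) j) • bV j := by
          congr 1; funext j
          congr 1
          push_cast
          simp [ZMod.natCast_val, ZMod.cast_id]
      _ = x := bV.sum_repr x
  · intro g hg j
    have h0 : ∑ j, ((g j : ZMod p)) • bV j = 0 := by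
      rw [← hg]
      congr 1; funext j
      rw [Int.cast_smul_eq_zsmul]
    have := Fintype.linearIndependent_iff.mp bV.linearIndependent (fun j => (g j : ZMod p)) h0 j
    exact (ZMod.intCast_zmod_eq_zero_iff_dvd _ _).mp this

theorem step_lemma {Γ : Type*} [Group Γ] (S : Finset Γ)
    (hS : Subgroup.closure (S : Set Γ) = ⊤)
    {N : Type*} [AddCommGroup N] [Module (MonoidAlgebra ℤ Γ) N]
    (T : Finset N) (hT : Submodule.span (MonoidAlgebra ℤ Γ) (T : Set N) = ⊤)
    (p : ℕ) (hp : p.Prime) (M' : Submodule (MonoidAlgebra ℤ Γ) N)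
    (hpM : ∀ n : N, (p : ℤ) • n ∈ M') (hfin : Finite (N ⧸ M')) :
    ∃ r : ℕ, Nat.card (N ⧸ M') = p ^ r ∧
      ∃ T₀ : Finset N, Submodule.span (MonoidAlgebra ℤ Γ) (T₀ : Set N) = M' ∧
        T₀.card ≤ T.card + (2 * S.card + 1) * r := by
  classical
  haveI : Fact p.Prime := ⟨hp⟩
  letI : Module (ZMod p) (N ⧸ M') := AddCommGroup.zmodModule (n := p) (by
    intro x
    obtain ⟨n, rfl⟩ := Submodule.Quotient.mk_surjective M' x
    have h2 : ((p : ℤ) • (Submodule.Quotient.mk n : N ⧸ M')) = 0 := by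
      rw [← Submodule.mkQ_apply, ← map_zsmul, Submodule.mkQ_apply,
        Submodule.Quotient.mk_eq_zero]
      exact hpM n
    rwa [natCast_zsmul] at h2)
  obtain ⟨r, hcard, v, c, hrep, hind⟩ := fp_coords (V := N ⧸ M') p
  refine ⟨r, hcard, ?_⟩
  choose w hw using fun j : Fin r => Submodule.Quotient.mk_surjective M' (v j)
  -- section σ and correction ρ
  set σ : (N ⧸ M') → N := fun x => ∑ j, c x j • w j with hσdef
  have hσ : ∀ x, Submodule.Quotient.mk (σ x) = x := by
    intro x
    have : M'.mkQ (σ x) = x := by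
      rw [hσdef]
      simp only [map_sum, map_zsmul, Submodule.mkQ_apply, hw]
      exact hrep x
    simpa using this
  set ρ : N → N := fun x => x - σ (Submodule.Quotient.mk x) with hρdef
  have hρmem : ∀ x, ρ x ∈ M' := by
    intro x
    rw [← Submodule.Quotient.mk_eq_zero, hρdef]
    simp only [Submodule.Quotient.mk_sub, hσ, sub_self]
  have hρeq : ∀ x : N, x = ρ x + σ (Submodule.Quotient.mk x) := by
    intro x; rw [hρdef]; simp
  -- the generating set
  set T₀ : Finset N :=
    ((T.image ρ ∪ (Finset.univ : Finset (Fin r)).image fun j => (p : ℤ) • w j) ∪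
      (S ×ˢ (Finset.univ : Finset (Fin r))).image fun q => ρ (of ℤ Γ q.1 • w q.2)) ∪
      (S ×ˢ (Finset.univ : Finset (Fin r))).image fun q => ρ (of ℤ Γ q.1⁻¹ • w q.2)
    with hT₀def
  have hcardT₀ : T₀.card ≤ T.card + (2 * S.card + 1) * r := by
    calc T₀.card ≤ ((T.image ρ ∪ (Finset.univ : Finset (Fin r)).image fun j => (p : ℤ) • w j).card
        + ((S ×ˢ (Finset.univ : Finset (Fin r))).image fun q => ρ (of ℤ Γ q.1 • w q.2)).card)
        + ((S ×ˢ (Finset.univ : Finset (Fin r))).image fun q => ρ (of ℤ Γ q.1⁻¹ • w q.2)).card := by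
          rw [hT₀def]
          exact le_trans (Finset.card_union_le _ _)
            (Nat.add_le_add_right (Finset.card_union_le _ _) _)
      _ ≤ ((T.card + r) + S.card * r) + S.card * r := by
          gcongr
          · exact le_trans (Finset.card_union_le _ _)
              (Nat.add_le_add Finset.card_image_le
                (le_trans Finset.card_image_le (by simp)))
          · exact le_trans Finset.card_image_le (by simp)
          · exact le_trans Finset.card_image_le (by simp)
      _ ≤ T.card + (2 * S.card + 1) * r := by ring_nf; omega
  refine ⟨T₀, ?_, hcardT₀⟩
  set L : Submodule (MonoidAlgebra ℤ Γ) N := Submodule.span (MonoidAlgebra ℤ Γ) (T₀ : Set N)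
    with hLdef
  have hσmem : ∀ x, σ x ∈ Submodule.span ℤ (Set.range w) := by
    intro x
    rw [hσdef]
    exact Submodule.sum_mem _ fun j _ =>
      zsmul_mem (Submodule.subset_span (Set.mem_range_self j)) _
  have hLM' : L ≤ M' := by
    rw [hLdef, Submodule.span_le]
    intro x hx
    rw [hT₀def] at hx
    simp only [Finset.coe_union, Set.mem_union, Finset.coe_image, Set.mem_image,
      Finset.mem_coe, Finset.coe_product] at hx
    rcases hx with ((⟨y, _, rfl⟩ | ⟨j, _, rfl⟩) | ⟨q, _, rfl⟩) | ⟨q, _, rfl⟩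
    · exact hρmem y
    · exact hpM _
    · exact hρmem _
    · exact hρmem _
  have hgen_mem : ∀ x ∈ T₀, (x : N) ∈ L := fun x hx => Submodule.subset_span hx
  -- the ℤ-submodule W
  set W : Submodule ℤ N := L.restrictScalars ℤ ⊔ Submodule.span ℤ (Set.range w) with hWdef
  have hLW : ∀ x ∈ L, x ∈ W := fun x hx => Submodule.mem_sup_left hx
  have hsW : ∀ x, σ x ∈ W := fun x => Submodule.mem_sup_right (hσmem x)
  -- stability of W under generators of Γ
  have hkey : ∀ γ : Γ, (∀ j, of ℤ Γ γ • w j ∈ W) → ∀ x ∈ W, of ℤ Γ γ • x ∈ W := by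
    intro γ hγw x hx
    rw [hWdef] at hx
    rcases Submodule.mem_sup.mp hx with ⟨a, ha, b, hb, rfl⟩
    rw [smul_add]
    refine Submodule.add_mem _ (hLW _ (L.smul_mem _ ha)) ?_
    refine Submodule.span_induction (p := fun b _ => of ℤ Γ γ • b ∈ W) ?_ ?_ ?_ ?_ hb
    · rintro y ⟨j, rfl⟩; exact hγw j
    · simp only [smul_zero]; exact W.zero_mem
    · intro y z _ _ hy hz; rw [smul_add]; exact W.add_mem hy hz
    · intro z y _ hy; rw [smul_comm]; exact W.smul_mem _ hy
  have hwγ : ∀ γ ∈ S, ∀ j, (of ℤ Γ γ • w j ∈ W ∧ of ℤ Γ γ⁻¹ • w j ∈ W) := by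
    intro γ hγ j
    constructor
    · rw [hρeq (of ℤ Γ γ • w j)]
      refine W.add_mem (hLW _ (hgen_mem _ ?_)) (hsW _)
      rw [hT₀def]
      simp only [Finset.mem_union, Finset.mem_image]
      exact Or.inl (Or.inr ⟨(γ, j), by simp [hγ], rfl⟩)
    · rw [hρeq (of ℤ Γ γ⁻¹ • w j)]
      refine W.add_mem (hLW _ (hgen_mem _ ?_)) (hsW _)
      rw [hT₀def]
      simp only [Finset.mem_union, Finset.mem_image]
      exact Or.inr ⟨(γ, j), by simp [hγ], rfl⟩
  have hstable : ∀ γ : Γ, ∀ x ∈ W, of ℤ Γ γ • x ∈ W := by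
    set H : Subgroup Γ :=
      { carrier := {γ | (∀ x ∈ W, of ℤ Γ γ • x ∈ W) ∧ (∀ x ∈ W, of ℤ Γ γ⁻¹ • x ∈ W)}
        one_mem' := by
          constructor
          · intro x hx; rw [map_one, one_smul]; exact hx
          · intro x hx; rw [inv_one, map_one, one_smul]; exact hx
        mul_mem' := by
          rintro a b ⟨ha1, ha2⟩ ⟨hb1, hb2⟩
          constructor
          · intro x hx
            rw [map_mul, mul_smul]
            exact ha1 _ (hb1 _ hx)
          · intro x hx
            rw [mul_inv_rev, map_mul, mul_smul]
            exact hb2 _ (ha2 _ hx)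
        inv_mem' := by
          rintro a ⟨ha1, ha2⟩
          exact ⟨ha2, by simpa using ha1⟩ } with hHdef
    have hSH : (S : Set Γ) ⊆ H := by
      intro γ hγ
      constructor
      · exact hkey γ (fun j => (hwγ γ hγ j).1)
      · exact hkey γ⁻¹ fun j => (hwγ γ hγ j).2
    have : (⊤ : Subgroup Γ) ≤ H := by
      rw [← hS]; exact Subgroup.closure_le H |>.mpr hSH
    exact fun γ => ((this (Subgroup.mem_top γ)).1)
  -- W is an R-submodule containing T, hence everything
  have hWsmul : ∀ (rr : MonoidAlgebra ℤ Γ) (x : N), x ∈ W → rr • x ∈ W := by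
    intro rr x hx
    induction rr using MonoidAlgebra.induction_linear with
    | zero => rw [zero_smul]; exact W.zero_mem
    | add f g hf hg => rw [add_smul]; exact W.add_mem hf hg
    | single γ z =>
        have h1 : (MonoidAlgebra.single γ z : MonoidAlgebra ℤ Γ) = z • of ℤ Γ γ := by
          rw [MonoidAlgebra.of_apply, MonoidAlgebra.smul_single']
          simp
        rw [h1, smul_assoc]
        exact W.smul_mem _ (hstable γ x hx)
  have hWtop : ∀ x : N, x ∈ W := by
    set Wmod : Submodule (MonoidAlgebra ℤ Γ) N :=
      { carrier := W
        add_mem' := fun ha hb => W.add_mem ha hb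
        zero_mem' := W.zero_mem
        smul_mem' := fun rr x hx => hWsmul rr x hx } with hWmod
    have hTW : (T : Set N) ⊆ Wmod := by
      intro x hx
      show x ∈ W
      rw [hρeq x]
      refine W.add_mem (hLW _ (hgen_mem _ ?_)) (hsW _)
      rw [hT₀def]
      simp only [Finset.mem_union]
      exact Or.inl (Or.inl (Or.inl (Finset.mem_image_of_mem ρ hx)))
    have : (⊤ : Submodule (MonoidAlgebra ℤ Γ) N) ≤ Wmod := by
      rw [← hT]; exact Submodule.span_le.mpr hTW
    exact fun x => this trivial
  -- conclude M' ≤ L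
  refine le_antisymm hLM' ?_
  intro m hm
  rcases Submodule.mem_sup.mp (by rw [← hWdef]; exact hWtop m) with ⟨a, ha, b, hb, heq⟩
  have hbM' : b ∈ M' := by
    have : b = m - a := by rw [← heq]; abel
    rw [this]
    exact M'.sub_mem hm (hLM' ha)
  obtain ⟨cf, hcf⟩ := (mem_span_range_iff_exists_fun ℤ).mp hb
  have hmk : ∑ j, cf j • v j = 0 := by
    have h0 : M'.mkQ b = 0 := by rwa [Submodule.mkQ_apply, Submodule.Quotient.mk_eq_zero]
    rw [← hcf] at h0
    simp only [map_sum, map_zsmul, Submodule.mkQ_apply, hw] at h0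
    exact h0
  have hdvd := hind cf hmk
  have hbL : b ∈ L := by
    rw [← hcf]
    refine Submodule.sum_mem _ fun j _ => ?_
    obtain ⟨e, he⟩ := hdvd j
    have : cf j • w j = e • ((p : ℤ) • w j) := by
      rw [smul_smul, he, mul_comm]
    rw [this]
    refine zsmul_mem (hgen_mem _ ?_) _
    rw [hT₀def]
    simp only [Finset.mem_union, Finset.mem_image]
    exact Or.inl (Or.inl (Or.inr ⟨j, Finset.mem_univ j, rfl⟩))
  rw [← heq]
  exact L.add_mem ha hbL

theorem main_aux {Γ : Type*} [Group Γ] (S : Finset Γ)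
    (hS : Subgroup.closure (S : Set Γ) = ⊤) (b : ℕ) :
    ∀ {N : Type u} [AddCommGroup N] [Module (MonoidAlgebra ℤ Γ) N]
      (T : Finset N), Submodule.span (MonoidAlgebra ℤ Γ) (T : Set N) = ⊤ →
      ∀ (N₀ : Submodule (MonoidAlgebra ℤ Γ) N), 0 < b → Nat.card (N ⧸ N₀) = b →
      ∃ T₀ : Finset N, Submodule.span (MonoidAlgebra ℤ Γ) (T₀ : Set N) = N₀ ∧
        (T₀.card : ℝ) ≤ T.card + (2 * S.card + 1) * Real.logb 2 b := by
  induction b using Nat.strong_induction_on with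
  | _ b IH =>
  intro N _ _ T hT N₀ hb hidx
  classical
  haveI hfinQ : Finite (N ⧸ N₀) := by
    rcases Nat.card_pos_iff.mp (hidx ▸ hb) with ⟨_, h⟩; exact h
  by_cases hb1 : b = 1
  · subst hb1
    have htop : N₀ = ⊤ := by
      haveI hsub : Subsingleton (N ⧸ N₀) := (Nat.card_eq_one_iff_unique.mp hidx).1
      rw [Submodule.eq_top_iff']
      intro x
      rw [← Submodule.Quotient.mk_eq_zero]
      exact Subsingleton.elim _ _
    refine ⟨T, by rw [htop]; exact hT, ?_⟩
    simp [Real.logb_one]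
  -- b ≥ 2
  set p := b.minFac with hpdef
  have hp : p.Prime := Nat.minFac_prime hb1
  haveI : Fact p.Prime := ⟨hp⟩
  set M₁ : Submodule (MonoidAlgebra ℤ Γ) N :=
    N₀ ⊔ LinearMap.range ((p : ℤ) • (LinearMap.id : N →ₗ[MonoidAlgebra ℤ Γ] N)) with hM₁
  have hpM : ∀ n : N, (p : ℤ) • n ∈ M₁ := fun n =>
    Submodule.mem_sup_right ⟨n, by simp⟩
  have hle : N₀ ≤ M₁ := le_sup_left
  have hfinM₁ : Finite (N ⧸ M₁) := by
    have hsurj : Function.Surjective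
        (Submodule.mapQ N₀ M₁ LinearMap.id (by simpa using hle)) := by
      intro x
      obtain ⟨n, rfl⟩ := Submodule.Quotient.mk_surjective M₁ x
      exact ⟨Submodule.Quotient.mk n, by simp [Submodule.mapQ_apply]⟩
    exact Finite.of_surjective _ hsurj
  obtain ⟨r, hcard1, T₁, hT₁span, hT₁card⟩ := step_lemma S hS T hT p hp M₁ hpM hfinM₁
  have hr1 : 1 ≤ r := by
    by_contra hcon
    have hr0 : r = 0 := by omega
    have hM₁top : M₁ = ⊤ := by
      rw [hr0, pow_zero] at hcard1
      haveI : Subsingleton (N ⧸ M₁) := (Nat.card_eq_one_iff_unique.mp hcard1).1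
      rw [Submodule.eq_top_iff']
      intro x
      rw [← Submodule.Quotient.mk_eq_zero]
      exact Subsingleton.elim _ _
    have hsurj : Function.Surjective (fun y : N ⧸ N₀ => (p : ℤ) • y) := by
      intro y
      obtain ⟨n, rfl⟩ := Submodule.Quotient.mk_surjective N₀ y
      have hn : n ∈ M₁ := hM₁top ▸ Submodule.mem_top
      rcases Submodule.mem_sup.mp hn with ⟨a, ha, cc, hc, heq⟩
      rcases hc with ⟨m, hm⟩
      refine ⟨Submodule.Quotient.mk m, ?_⟩
      have hmm : ((p : ℤ) • m : N) = cc := by simpa using hm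
      show (p : ℤ) • (N₀.mkQ m) = N₀.mkQ n
      rw [← map_zsmul, hmm, ← heq, map_add]
      have ha0 : N₀.mkQ a = 0 := by
        rw [Submodule.mkQ_apply, Submodule.Quotient.mk_eq_zero]; exact ha
      rw [ha0, zero_add]
    have hinj := Finite.injective_iff_surjective.mpr hsurj
    have hdvd : p ∣ Nat.card (N ⧸ N₀) := by
      rw [hidx]; exact Nat.minFac_dvd b
    obtain ⟨x, hx⟩ := exists_prime_addOrderOf_dvd_card' p hdvd
    have hfx : (p : ℤ) • x = 0 := by
      have h1 : (addOrderOf x) • x = 0 := addOrderOf_nsmul_eq_zero x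
      rw [hx] at h1
      rw [natCast_zsmul]; exact h1
    have hx0 : x = 0 := hinj (show (p : ℤ) • x = (p : ℤ) • (0 : N ⧸ N₀) by
      rw [hfx, smul_zero])
    rw [hx0, addOrderOf_zero] at hx
    exact hp.ne_one hx.symm
  -- recurse inside M₁
  set N₀' : Submodule (MonoidAlgebra ℤ Γ) ↥M₁ := N₀.comap M₁.subtype with hN₀'
  have hker : LinearMap.ker (N₀.mkQ ∘ₗ M₁.subtype) = N₀' := by
    rw [LinearMap.ker_comp, Submodule.ker_mkQ]
  have hrange : LinearMap.range (N₀.mkQ ∘ₗ M₁.subtype) = M₁.map N₀.mkQ := by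
    rw [LinearMap.range_comp, Submodule.range_subtype]
  have hcardeq : Nat.card (↥M₁ ⧸ N₀') = Nat.card (M₁.map N₀.mkQ) := by
    have e := (Submodule.quotEquivOfEq N₀' _ hker.symm).trans
      (LinearMap.quotKerEquivRange (N₀.mkQ ∘ₗ M₁.subtype))
    rw [Nat.card_congr e.toEquiv, hrange]
  set b' := Nat.card (↥M₁ ⧸ N₀') with hb'def
  have hbmul : b' * p ^ r = b := by
    have h := Submodule.card_quotient_mul_card_quotient M₁ N₀ hle
    rw [hidx, hcard1] at h
    rw [hcardeq]
    exact h
  have h2pr : 2 ≤ p ^ r := le_trans hp.two_le (Nat.le_self_pow (by omega) p)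
  have hb'pos : 0 < b' := by
    rcases Nat.eq_zero_or_pos b' with h | h
    · rw [h, zero_mul] at hbmul; omega
    · exact h
  have hb'lt : b' < b := by nlinarith
  -- lift generators of M₁ into the subtype
  have hT₁mem : ∀ x ∈ T₁, x ∈ M₁ := fun x hx => hT₁span ▸ Submodule.subset_span hx
  set T₁' : Finset ↥M₁ := T₁.attach.map
    ⟨fun x => ⟨x.1, hT₁mem x.1 x.2⟩,
      fun a c hac => by exact Subtype.ext (Subtype.mk_eq_mk.mp hac)⟩ with hT₁'def
  have hT₁'card : T₁'.card = T₁.card := by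
    rw [hT₁'def, Finset.card_map, Finset.card_attach]
  have himg : (M₁.subtype) '' (T₁' : Set ↥M₁) = (T₁ : Set N) := by
    ext x
    constructor
    · rintro ⟨y, hy, rfl⟩
      simp only [Finset.mem_coe, hT₁'def, Finset.mem_map] at hy
      obtain ⟨a, _, rfl⟩ := hy
      exact a.2
    · intro hx
      refine ⟨⟨x, hT₁mem x hx⟩, ?_, rfl⟩
      simp only [Finset.mem_coe, hT₁'def, Finset.mem_map]
      exact ⟨⟨x, hx⟩, Finset.mem_attach _ _, rfl⟩
  have hspan' : Submodule.span (MonoidAlgebra ℤ Γ) (T₁' : Set ↥M₁) = ⊤ := by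
    apply Submodule.map_injective_of_injective (Submodule.injective_subtype M₁)
    rw [Submodule.map_span, himg, hT₁span, Submodule.map_subtype_top]
  obtain ⟨T₀', hspan₀', hcard₀'⟩ := IH b' hb'lt T₁' hspan' N₀' hb'pos rfl
  set T₀ : Finset N := T₀'.image (M₁.subtype) with hT₀def
  have hspan₀ : Submodule.span (MonoidAlgebra ℤ Γ) (T₀ : Set N) = N₀ := by
    rw [hT₀def, Finset.coe_image, Submodule.span_image, hspan₀', hN₀',
      Submodule.map_comap_subtype]
    exact inf_eq_right.mpr hle
  refine ⟨T₀, hspan₀, ?_⟩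
  clear_value T₀ T₁' b' N₀' M₁ p
  -- numerics
  have hppos : (0:ℝ) < (p : ℝ) := by exact_mod_cast hp.pos
  have hb'r : (0:ℝ) < (b' : ℝ) := by exact_mod_cast hb'pos
  have hlogb : Real.logb 2 (b : ℝ) = Real.logb 2 (b' : ℝ) + r * Real.logb 2 (p : ℝ) := by
    rw [← hbmul]
    push_cast
    rw [Real.logb_mul (ne_of_gt hb'r) (ne_of_gt (pow_pos hppos r)), Real.logb_pow]
  have hlogp : 1 ≤ Real.logb 2 (p : ℝ) := by
    have h2 : Real.logb 2 2 = 1 := Real.logb_self_eq_one (by norm_num)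
    rw [← h2]
    exact Real.logb_le_logb_of_le (by norm_num) (by norm_num) (by exact_mod_cast hp.two_le)
  have hlogb'0 : 0 ≤ Real.logb 2 (b' : ℝ) := Real.logb_nonneg (by norm_num)
    (by exact_mod_cast hb'pos)
  have hc1 : (T₀.card : ℝ) ≤ (T₀'.card : ℝ) := by
    have := Finset.card_image_le (s := T₀') (f := (M₁.subtype : ↥M₁ → N))
    rw [hT₀def]
    exact_mod_cast this
  have hc2 : (T₀'.card : ℝ) ≤ (T₁.card : ℝ) + (2 * S.card + 1) * Real.logb 2 (b' : ℝ) := by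
    rw [← hT₁'card]; exact hcard₀'
  have hc3 : (T₁.card : ℝ) ≤ (T.card : ℝ) + (2 * S.card + 1) * (r : ℝ) := by
    exact_mod_cast hT₁card
  have hr1R : (1:ℝ) ≤ (r : ℝ) := by exact_mod_cast hr1
  have hrr : (r : ℝ) + Real.logb 2 (b' : ℝ) ≤ Real.logb 2 (b : ℝ) := by
    rw [hlogb]
    nlinarith
  have hfac : (0:ℝ) ≤ 2 * (S.card : ℝ) + 1 := by
    have : (0:ℝ) ≤ (S.card : ℝ) := Nat.cast_nonneg _
    linarith
  calc (T₀.card : ℝ) ≤ (T₁.card : ℝ) + (2 * S.card + 1) * Real.logb 2 (b' : ℝ) :=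
        le_trans hc1 hc2
    _ ≤ ((T.card : ℝ) + (2 * S.card + 1) * (r : ℝ))
        + (2 * S.card + 1) * Real.logb 2 (b' : ℝ) := add_le_add_left hc3 _
    _ = (T.card : ℝ) + (2 * S.card + 1) * ((r : ℝ) + Real.logb 2 (b' : ℝ)) := by ring
    _ ≤ (T.card : ℝ) + (2 * S.card + 1) * Real.logb 2 (b : ℝ) :=
        add_le_add_right (mul_le_mul_of_nonneg_left hrr hfac) _

/-- Let `Γ` be a group generated by `d` elements and `N` a `ℤΓ`-module generated by
`t` elements. If `N₀ ≤ N` is a `ℤΓ`-submodule of finite (additive) index `b`, then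
`N₀` is generated as a `ℤΓ`-module by at most `t + (2d+1)·log₂ b` elements. -/
theorem submodule_generation_bound {Γ : Type*} [Group Γ] (dn : ℕ)
    (hΓ : ∃ S : Finset Γ, S.card = dn ∧ Subgroup.closure (S : Set Γ) = ⊤)
    {N : Type*} [AddCommGroup N] [Module (MonoidAlgebra ℤ Γ) N] (t : ℕ)
    (hN : ∃ T : Finset N, T.card = t ∧ Submodule.span (MonoidAlgebra ℤ Γ) (T : Set N) = ⊤)
    (N₀ : Submodule (MonoidAlgebra ℤ Γ) N) (b : ℕ) (hb : 0 < b)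
    (hidx : Nat.card (N ⧸ N₀) = b) :
    ∃ T₀ : Finset N, Submodule.span (MonoidAlgebra ℤ Γ) (T₀ : Set N) = N₀ ∧
      (T₀.card : ℝ) ≤ t + (2 * dn + 1) * Real.logb 2 b := by
  obtain ⟨S, hScard, hSclo⟩ := hΓ
  obtain ⟨T, hTcard, hTspan⟩ := hN
  obtain ⟨T₀, h1, h2⟩ := main_aux S hSclo b T hTspan N₀ hb hidx
  refine ⟨T₀, h1, ?_⟩
  rw [← hScard, ← hTcard]
  exact h2
end

section
/- Let Γ be a residually finite group generated by two finitely generated subgroups G₁ and G₂ with A = G₁ ∩ G₂ infinite, and let (Γₙ) be a normal chain in Γ (with [A : A ∩ Γₙ] → ∞). Then RG(Γ,(Γₙ)) ≤ RG(G₁,(G₁ ∩ Γₙ)) + RG(G₂,(G₂ ∩ Γₙ)). -/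
open Filter

namespace RGAux
open Pointwise

variable {Γ : Type*} [Group Γ]

open Classical in
/-- coset representative function, normalized so that the coset of `1` gets rep `1`. -/
noncomputable def rep (M : Subgroup Γ) (q : Γ ⧸ M) : Γ :=
  if q = ((1 : Γ) : Γ ⧸ M) then 1 else q.out

lemma rep_spec (M : Subgroup Γ) (q : Γ ⧸ M) : ((rep M q : Γ) : Γ ⧸ M) = q := by
  unfold rep
  split
  · next h => rw [h]
  · exact QuotientGroup.out_eq' q


lemma rep_one (M : Subgroup Γ) : rep M ((1 : Γ) : Γ ⧸ M) = 1 := by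
  unfold rep; rw [if_pos rfl]

lemma d_le_card (K : Subgroup Γ) (U : Finset Γ)
    (hsub : (U : Set Γ) ⊆ (K : Set Γ)) (hcl : Subgroup.closure (U : Set Γ) = K) :
    d K ≤ U.card := by
  classical
  set V : Finset K := U.attach.image (fun u => (⟨u.1, hsub u.2⟩ : K)) with hV
  have hcard : V.card ≤ U.card := Finset.card_image_le.trans (by rw [Finset.card_attach])
  have himg : (K.subtype) '' (V : Set K) = (U : Set Γ) := by
    ext g
    constructor
    · rintro ⟨x, hx, rfl⟩
      rw [Finset.mem_coe, hV, Finset.mem_image] at hx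
      obtain ⟨u, -, rfl⟩ := hx
      exact u.2
    · intro hg
      refine ⟨⟨g, hsub hg⟩, ?_, rfl⟩
      rw [Finset.mem_coe, hV, Finset.mem_image]
      exact ⟨⟨g, hg⟩, Finset.mem_attach _ _, rfl⟩
  have hclV : Subgroup.closure (V : Set K) = ⊤ := by
    apply Subgroup.map_injective K.subtype_injective
    rw [MonoidHom.map_closure, himg, hcl, ← MonoidHom.range_eq_map, Subgroup.range_subtype]
  have hmem : V.card ∈ {n | ∃ S : Finset K, S.card = n ∧ Subgroup.closure (S : Set K) = ⊤} :=
    ⟨V, rfl, hclV⟩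
  exact (Nat.sInf_le hmem).trans hcard

lemma exists_d_gen (G : Type*) [Group G] [Group.FG G] :
    ∃ S : Finset G, S.card = d G ∧ Subgroup.closure (S : Set G) = ⊤ := by
  have h : {n | ∃ S : Finset G, S.card = n ∧ Subgroup.closure (S : Set G) = ⊤}.Nonempty := by
    obtain ⟨n, S, h1, h2⟩ := Group.fg_iff'.mp ‹_›
    exact ⟨n, S, h1, h2⟩
  exact Nat.sInf_mem h


lemma key (N G₁ G₂ : Subgroup Γ) [hN : N.Normal] [N.FiniteIndex]
    (hgen : G₁ ⊔ G₂ = ⊤) (S₁ S₂ : Finset Γ)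
    (h₁ : Subgroup.closure (S₁ : Set Γ) = N ⊓ G₁)
    (h₂ : Subgroup.closure (S₂ : Set Γ) = N ⊓ G₂) :
    d N ≤ (N ⊔ G₁).index * S₁.card + (N ⊔ G₂).index * S₂.card
      + ((N ⊔ (G₁ ⊓ G₂)).index + (N ⊔ (G₁ ⊓ G₂)).index) := by
  classical
  set A := G₁ ⊓ G₂ with hAdef
  haveI : (N ⊔ A).FiniteIndex := Subgroup.finiteIndex_of_le le_sup_left
  haveI : (N ⊔ G₁).FiniteIndex := Subgroup.finiteIndex_of_le le_sup_left
  haveI : (N ⊔ G₂).FiniteIndex := Subgroup.finiteIndex_of_le le_sup_left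
  haveI : Fintype (Γ ⧸ (N ⊔ A)) := Fintype.ofFinite _
  haveI : Fintype (Γ ⧸ (N ⊔ G₁)) := Fintype.ofFinite _
  haveI : Fintype (Γ ⧸ (N ⊔ G₂)) := Fintype.ofFinite _
  set x : Γ ⧸ (N ⊔ A) → Γ := rep (N ⊔ A) with hxdef
  have exb : ∀ (G : Subgroup Γ) (q : Γ ⧸ (N ⊔ A)),
      ∃ b : Γ, b ∈ N ∧ (x q)⁻¹ * b * rep (N ⊔ G) ((x q : Γ) : Γ ⧸ (N ⊔ G)) ∈ G := by
    intro G q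
    set xq := x q with hxqd
    set yq := rep (N ⊔ G) ((xq : Γ) : Γ ⧸ (N ⊔ G)) with hyqd
    have hy : ((yq : Γ) : Γ ⧸ (N ⊔ G)) = ((xq : Γ) : Γ ⧸ (N ⊔ G)) := rep_spec _ _
    have hx : xq⁻¹ * yq ∈ N ⊔ G := QuotientGroup.eq.mp hy.symm
    have hset : ((N ⊔ G : Subgroup Γ) : Set Γ) = (G : Set Γ) * (N : Set Γ) := by
      rw [sup_comm]; exact Subgroup.mul_normal G N
    rw [← SetLike.mem_coe, hset, Set.mem_mul] at hx
    obtain ⟨g, hg, m, hm, hgm⟩ := hx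
    have e1 : xq * g * m = yq := by rw [mul_assoc, hgm]; group
    refine ⟨xq * g * yq⁻¹, ?_, ?_⟩
    · have e2 : xq * g * yq⁻¹ = yq * m⁻¹ * yq⁻¹ := by rw [← e1]; group
      rw [e2]
      exact hN.conj_mem _ (inv_mem hm) yq
    · have e3 : xq⁻¹ * (xq * g * yq⁻¹) * yq = g := by group
      rw [e3]; exact hg
  choose b₁ hb₁N hb₁G using exb G₁
  choose b₂ hb₂N hb₂G using exb G₂
  set U : Finset Γ :=
    ((((Finset.univ ×ˢ S₁).image fun p : (Γ ⧸ (N ⊔ G₁)) × Γ =>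
        rep (N ⊔ G₁) p.1 * p.2 * (rep (N ⊔ G₁) p.1)⁻¹)
      ∪ ((Finset.univ ×ˢ S₂).image fun p : (Γ ⧸ (N ⊔ G₂)) × Γ =>
        rep (N ⊔ G₂) p.1 * p.2 * (rep (N ⊔ G₂) p.1)⁻¹))
      ∪ (Finset.univ.image b₁)) ∪ (Finset.univ.image b₂) with hUdef
  set H := Subgroup.closure (U : Set Γ) with hHdef
  -- membership of the four families in H
  have hU1 : ∀ (q : Γ ⧸ (N ⊔ G₁)) (s : Γ), s ∈ S₁ →
      rep (N ⊔ G₁) q * s * (rep (N ⊔ G₁) q)⁻¹ ∈ H := by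
    intro q s hs
    apply Subgroup.subset_closure
    rw [hUdef]
    refine Finset.mem_union_left _ (Finset.mem_union_left _ (Finset.mem_union_left _ ?_))
    exact Finset.mem_image_of_mem _ (Finset.mk_mem_product (Finset.mem_univ q) hs)
  have hU2 : ∀ (q : Γ ⧸ (N ⊔ G₂)) (s : Γ), s ∈ S₂ →
      rep (N ⊔ G₂) q * s * (rep (N ⊔ G₂) q)⁻¹ ∈ H := by
    intro q s hs
    apply Subgroup.subset_closure
    rw [hUdef]
    refine Finset.mem_union_left _ (Finset.mem_union_left _ (Finset.mem_union_right _ ?_))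
    exact Finset.mem_image_of_mem _ (Finset.mk_mem_product (Finset.mem_univ q) hs)
  have hb₁H : ∀ q, b₁ q ∈ H := by
    intro q
    apply Subgroup.subset_closure
    rw [hUdef]
    exact Finset.mem_union_left _
      (Finset.mem_union_right _ (Finset.mem_image_of_mem _ (Finset.mem_univ q)))
  have hb₂H : ∀ q, b₂ q ∈ H := by
    intro q
    apply Subgroup.subset_closure
    rw [hUdef]
    exact Finset.mem_union_right _ (Finset.mem_image_of_mem _ (Finset.mem_univ q))
  have hS₁N : ∀ s ∈ S₁, s ∈ N ⊓ G₁ := fun s hs => h₁ ▸ Subgroup.subset_closure hs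
  have hS₂N : ∀ s ∈ S₂, s ∈ N ⊓ G₂ := fun s hs => h₂ ▸ Subgroup.subset_closure hs
  have hHN : H ≤ N := by
    rw [hHdef, Subgroup.closure_le]
    intro g hg
    rw [Finset.mem_coe, hUdef] at hg
    rcases Finset.mem_union.mp hg with hg | hg
    · rcases Finset.mem_union.mp hg with hg | hg
      · rcases Finset.mem_union.mp hg with hg | hg
        · obtain ⟨p, hp, rfl⟩ := Finset.mem_image.mp hg
          exact hN.conj_mem _ ((hS₁N p.2 (Finset.mem_product.mp hp).2).1) _
        · obtain ⟨p, hp, rfl⟩ := Finset.mem_image.mp hg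
          exact hN.conj_mem _ ((hS₂N p.2 (Finset.mem_product.mp hp).2).1) _
      · obtain ⟨q, -, rfl⟩ := Finset.mem_image.mp hg
        exact hb₁N q
    · obtain ⟨q, -, rfl⟩ := Finset.mem_image.mp hg
      exact hb₂N q
  have hconj : ∀ (y : Γ) (T : Finset Γ), (∀ s ∈ T, y * s * y⁻¹ ∈ H) →
      ∀ w ∈ Subgroup.closure (T : Set Γ), y * w * y⁻¹ ∈ H := by
    intro y T hy w hw
    refine Subgroup.closure_induction (fun s hs => hy s hs) ?_ ?_ ?_ hw
    · have : y * 1 * y⁻¹ = 1 := by group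
      rw [this]; exact one_mem H
    · intro u v hu hv ihu ihv
      have : y * (u * v) * y⁻¹ = (y * u * y⁻¹) * (y * v * y⁻¹) := by group
      rw [this]; exact mul_mem ihu ihv
    · intro u hu ihu
      have : y * u⁻¹ * y⁻¹ = (y * u * y⁻¹)⁻¹ := by group
      rw [this]; exact inv_mem ihu
  -- the core step
  have core : ∀ (G : Subgroup Γ) (bG : Γ ⧸ (N ⊔ A) → Γ),
      A ≤ G →
      (∀ q, bG q ∈ N) →
      (∀ q, bG q ∈ H) →
      (∀ q, (x q)⁻¹ * bG q * rep (N ⊔ G) ((x q : Γ) : Γ ⧸ (N ⊔ G)) ∈ G) →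
      (∀ (q : Γ ⧸ (N ⊔ A)) (w : Γ), w ∈ N → w ∈ G →
        rep (N ⊔ G) ((x q : Γ) : Γ ⧸ (N ⊔ G)) * w *
          (rep (N ⊔ G) ((x q : Γ) : Γ ⧸ (N ⊔ G)))⁻¹ ∈ H) →
      ∀ g ∈ G, ∀ (q : Γ ⧸ (N ⊔ A)) (h α : Γ), h ∈ H → α ∈ A →
      ∃ (q' : Γ ⧸ (N ⊔ A)) (h' α' : Γ), h' ∈ H ∧ α' ∈ A ∧
        h * x q * α * g = h' * x q' * α' := by
    intro G bG hAG hbN hbH hbG hconjG g hgG q h α hh hα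
    set xq := x q with hxqd
    set yq := rep (N ⊔ G) ((xq : Γ) : Γ ⧸ (N ⊔ G)) with hyqd
    set z := xq * α * g with hzd
    set q' : Γ ⧸ (N ⊔ A) := ((z : Γ) : Γ ⧸ (N ⊔ A)) with hq'd
    set x' := x q' with hx'd
    have hmkx' : ((x' : Γ) : Γ ⧸ (N ⊔ A)) = ((z : Γ) : Γ ⧸ (N ⊔ A)) := rep_spec _ _
    have hzx' : z⁻¹ * x' ∈ N ⊔ A := QuotientGroup.eq.mp hmkx'.symm
    have hset : ((N ⊔ A : Subgroup Γ) : Set Γ) = (A : Set Γ) * (N : Set Γ) := by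
      rw [sup_comm]; exact Subgroup.mul_normal A N
    rw [← SetLike.mem_coe, hset, Set.mem_mul] at hzx'
    obtain ⟨α₀, hα₀, m, hm, hprod⟩ := hzx'
    have hx'e : x' = z * (α₀ * m) := by rw [hprod]; group
    have hyy : rep (N ⊔ G) ((x' : Γ) : Γ ⧸ (N ⊔ G)) = yq := by
      have hmEq : ((x' : Γ) : Γ ⧸ (N ⊔ G)) = ((xq : Γ) : Γ ⧸ (N ⊔ G)) := by
        rw [QuotientGroup.eq]
        have e : x'⁻¹ * xq = m⁻¹ * α₀⁻¹ * g⁻¹ * α⁻¹ := by rw [hx'e, hzd]; group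
        rw [e]
        exact mul_mem (mul_mem (mul_mem (Subgroup.mem_sup_left (inv_mem hm))
          (Subgroup.mem_sup_right (inv_mem (hAG hα₀))))
          (Subgroup.mem_sup_right (inv_mem hgG)))
          (Subgroup.mem_sup_right (inv_mem (hAG hα)))
      rw [hmEq]
    set b := bG q with hbd
    set b' := bG q' with hb'd
    set g₁ := xq⁻¹ * b * yq with hg₁d
    set g₂ := x'⁻¹ * b' * yq with hg₂d
    have hg₁ : g₁ ∈ G := hbG q
    have hg₂ : g₂ ∈ G := by
      have := hbG q'
      rw [← hx'd, hyy] at this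
      exact this
    set w := g₁⁻¹ * (α * g * α₀) * g₂ with hwd
    have hwG : w ∈ G :=
      mul_mem (mul_mem (inv_mem hg₁) (mul_mem (mul_mem (hAG hα) hgG) (hAG hα₀))) hg₂
    have hwN : w ∈ N := by
      have e : w = yq⁻¹ * (b⁻¹ * (x' * m⁻¹ * x'⁻¹) * b') * yq := by
        rw [hwd, hg₁d, hg₂d, hx'e, hzd]; group
      rw [e]
      have h1 : x' * m⁻¹ * x'⁻¹ ∈ N := hN.conj_mem _ (inv_mem hm) x'
      have h2 : b⁻¹ * (x' * m⁻¹ * x'⁻¹) * b' ∈ N :=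
        mul_mem (mul_mem (inv_mem (hbN q)) h1) (hbN q')
      have e2 : yq⁻¹ * (b⁻¹ * (x' * m⁻¹ * x'⁻¹) * b') * yq
          = yq⁻¹ * (b⁻¹ * (x' * m⁻¹ * x'⁻¹) * b') * (yq⁻¹)⁻¹ := by group
      rw [e2]
      exact hN.conj_mem _ h2 yq⁻¹
    have hp : yq * w * yq⁻¹ ∈ H := hconjG q w hwN hwG
    refine ⟨q', h * (b * (yq * w * yq⁻¹) * b'⁻¹), α₀⁻¹, ?_, inv_mem (show α₀ ∈ A from hα₀), ?_⟩
    · exact mul_mem hh (mul_mem (mul_mem (hbH q) hp) (inv_mem (hbH q')))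
    · rw [hwd, hg₁d, hg₂d, ← hx'd, hx'e, hzd]; group
  have core1 := core G₁ b₁ inf_le_left hb₁N hb₁H hb₁G
    (fun q w hwN hwG => hconj _ S₁ (fun s hs => hU1 _ s hs) w (h₁ ▸ ⟨hwN, hwG⟩))
  have core2 := core G₂ b₂ inf_le_right hb₂N hb₂H hb₂G
    (fun q w hwN hwG => hconj _ S₂ (fun s hs => hU2 _ s hs) w (h₂ ▸ ⟨hwN, hwG⟩))
  -- every element of Γ lies in some H * x q * A
  have hallK : ∀ γ : Γ, ∃ (q : Γ ⧸ (N ⊔ A)) (h α : Γ), h ∈ H ∧ α ∈ A ∧ γ = h * x q * α := by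
    have hγtop : ∀ γ : Γ, γ ∈ Subgroup.closure ((G₁ : Set Γ) ∪ (G₂ : Set Γ)) := by
      intro γ
      rw [Subgroup.closure_union, Subgroup.closure_eq, Subgroup.closure_eq, hgen]
      exact Subgroup.mem_top γ
    intro γ
    have step : ∀ (q : Γ ⧸ (N ⊔ A)) (h α : Γ), h ∈ H → α ∈ A →
        (∃ (q' : Γ ⧸ (N ⊔ A)) (h' α' : Γ), h' ∈ H ∧ α' ∈ A ∧
          h * x q * α * γ = h' * x q' * α') ∧
        (∃ (q' : Γ ⧸ (N ⊔ A)) (h' α' : Γ), h' ∈ H ∧ α' ∈ A ∧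
          h * x q * α * γ⁻¹ = h' * x q' * α') := by
      refine Subgroup.closure_induction ?_ ?_ ?_ ?_ (hγtop γ)
      · rintro s (hs | hs) q h α hh hα
        · exact ⟨core1 s hs q h α hh hα, core1 s⁻¹ (inv_mem hs) q h α hh hα⟩
        · exact ⟨core2 s hs q h α hh hα, core2 s⁻¹ (inv_mem hs) q h α hh hα⟩
      · intro q h α hh hα
        constructor
        · exact ⟨q, h, α, hh, hα, by group⟩
        · exact ⟨q, h, α, hh, hα, by group⟩
      · intro u v hu hv ihu ihv q h α hh hα
        constructor
        · obtain ⟨q1, h1, α1, hh1, hα1, e1⟩ := (ihu q h α hh hα).1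
          obtain ⟨q2, h2, α2, hh2, hα2, e2⟩ := (ihv q1 h1 α1 hh1 hα1).1
          refine ⟨q2, h2, α2, hh2, hα2, ?_⟩
          rw [show h * x q * α * (u * v) = h * x q * α * u * v by group, e1]
          exact e2
        · obtain ⟨q1, h1, α1, hh1, hα1, e1⟩ := (ihv q h α hh hα).2
          obtain ⟨q2, h2, α2, hh2, hα2, e2⟩ := (ihu q1 h1 α1 hh1 hα1).2
          refine ⟨q2, h2, α2, hh2, hα2, ?_⟩
          rw [show h * x q * α * (u * v)⁻¹ = h * x q * α * v⁻¹ * u⁻¹ by group, e1]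
          exact e2
      · intro u hu ihu q h α hh hα
        refine ⟨(ihu q h α hh hα).2, ?_⟩
        obtain ⟨q1, h1, α1, hh1, hα1, e1⟩ := (ihu q h α hh hα).1
        refine ⟨q1, h1, α1, hh1, hα1, ?_⟩
        rw [show h * x q * α * u⁻¹⁻¹ = h * x q * α * u by group]
        exact e1
    obtain ⟨q', h', α', hh', hα', e⟩ :=
      (step ((1 : Γ) : Γ ⧸ (N ⊔ A)) 1 1 (one_mem H) (one_mem A)).1
    refine ⟨q', h', α', hh', hα', ?_⟩
    rw [← e, hxdef, rep_one]
    group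
  -- N ≤ H
  have hS₁H : ∀ s ∈ S₁, s ∈ H := by
    intro s hs
    have := hU1 ((1 : Γ) : Γ ⧸ (N ⊔ G₁)) s hs
    rwa [rep_one, one_mul, inv_one, mul_one] at this
  have hNH : N ≤ H := by
    intro mm hmm
    obtain ⟨q, h, α, hh, hα, hE⟩ := hallK mm
    have hxα : x q * α ∈ N := by
      have e : x q * α = h⁻¹ * mm := by rw [hE]; group
      rw [e]; exact mul_mem (inv_mem (hHN hh)) hmm
    have hq : q = ((1 : Γ) : Γ ⧸ (N ⊔ A)) := by
      have h1 := rep_spec (N ⊔ A) q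
      rw [hxdef] at *
      rw [← h1, QuotientGroup.eq]
      have e : (rep (N ⊔ A) q)⁻¹ * 1 = α * (x q * α)⁻¹ := by
        show (rep (N ⊔ A) q)⁻¹ * 1 = α * (rep (N ⊔ A) q * α)⁻¹; group
      rw [e]
      exact mul_mem (Subgroup.mem_sup_right hα) (Subgroup.mem_sup_left (inv_mem hxα))
    have hxq1 : x q = 1 := by rw [hxdef, hq, rep_one]
    have hαN : α ∈ N := by rwa [hxq1, one_mul] at hxα
    have hαH : α ∈ H := by
      have hmem : α ∈ Subgroup.closure (S₁ : Set Γ) := by rw [h₁]; exact ⟨hαN, hα.1⟩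
      exact (Subgroup.closure_le H).mpr (fun s hs => hS₁H s hs) hmem
    rw [hE, hxq1]
    simpa using mul_mem hh hαH
  -- conclude
  have hUN : (U : Set Γ) ⊆ (N : Set Γ) := fun g hg =>
    hHN (Subgroup.subset_closure hg)
  have hcl : Subgroup.closure (U : Set Γ) = N := le_antisymm (hHdef ▸ hHN) (hHdef ▸ hNH)
  refine (d_le_card N U hUN hcl).trans ?_
  have c1 : ((Finset.univ ×ˢ S₁).image fun p : (Γ ⧸ (N ⊔ G₁)) × Γ =>
      rep (N ⊔ G₁) p.1 * p.2 * (rep (N ⊔ G₁) p.1)⁻¹).card ≤ (N ⊔ G₁).index * S₁.card := by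
    refine Finset.card_image_le.trans ?_
    rw [Finset.card_product, Finset.card_univ, ← Nat.card_eq_fintype_card,
      ← Subgroup.index_eq_card]
  have c2 : ((Finset.univ ×ˢ S₂).image fun p : (Γ ⧸ (N ⊔ G₂)) × Γ =>
      rep (N ⊔ G₂) p.1 * p.2 * (rep (N ⊔ G₂) p.1)⁻¹).card ≤ (N ⊔ G₂).index * S₂.card := by
    refine Finset.card_image_le.trans ?_
    rw [Finset.card_product, Finset.card_univ, ← Nat.card_eq_fintype_card,
      ← Subgroup.index_eq_card]
  have c3 : (Finset.univ.image b₁).card ≤ (N ⊔ A).index := by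
    refine Finset.card_image_le.trans ?_
    rw [Finset.card_univ, ← Nat.card_eq_fintype_card, ← Subgroup.index_eq_card]
  have c4 : (Finset.univ.image b₂).card ≤ (N ⊔ A).index := by
    refine Finset.card_image_le.trans ?_
    rw [Finset.card_univ, ← Nat.card_eq_fintype_card, ← Subgroup.index_eq_card]
  have hunion : ∀ (a b c e : Finset Γ), (a ∪ b ∪ c ∪ e).card
      ≤ a.card + b.card + c.card + e.card := by
    intro a b c e
    refine (Finset.card_union_le _ _).trans ?_
    have h1 := Finset.card_union_le (a ∪ b) c
    have h2 := Finset.card_union_le a b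
    omega
  rw [hUdef]
  exact le_trans (hunion _ _ _ _) (by omega)



lemma real_step {dN d1 d2 p1 p2 e n1 n2 a n : ℕ}
    (hd : dN ≤ p1 * d1 + p2 * d2 + (e + e))
    (h1 : n1 * p1 = n) (h2 : n2 * p2 = n) (h3 : a * e = n) (hn : n ≠ 0) :
    ((dN : ℝ) - 1) / n ≤ ((d1 : ℝ) - 1) / n1 + ((d2 : ℝ) - 1) / n2
      + (1 / n1 + 1 / n2 + 2 / a) := by
  have hn1 : n1 ≠ 0 := fun h => hn (by rw [← h1, h, zero_mul])
  have hn2 : n2 ≠ 0 := fun h => hn (by rw [← h2, h, zero_mul])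
  have hp1 : p1 ≠ 0 := fun h => hn (by rw [← h1, h, mul_zero])
  have hp2 : p2 ≠ 0 := fun h => hn (by rw [← h2, h, mul_zero])
  have ha : a ≠ 0 := fun h => hn (by rw [← h3, h, zero_mul])
  have he : e ≠ 0 := fun h => hn (by rw [← h3, h, mul_zero])
  have hnR : (0 : ℝ) < (n : ℝ) := by exact_mod_cast Nat.pos_of_ne_zero hn
  have hn1R : (n1 : ℝ) ≠ 0 := Nat.cast_ne_zero.mpr hn1
  have hn2R : (n2 : ℝ) ≠ 0 := Nat.cast_ne_zero.mpr hn2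
  have hp1R : (p1 : ℝ) ≠ 0 := Nat.cast_ne_zero.mpr hp1
  have hp2R : (p2 : ℝ) ≠ 0 := Nat.cast_ne_zero.mpr hp2
  have haR : (a : ℝ) ≠ 0 := Nat.cast_ne_zero.mpr ha
  have heR : (e : ℝ) ≠ 0 := Nat.cast_ne_zero.mpr he
  have hc1 : ((p1 : ℝ) * d1) / (n : ℝ) = (d1 : ℝ) / n1 := by
    rw [← h1]; push_cast; field_simp
  have hc2 : ((p2 : ℝ) * d2) / (n : ℝ) = (d2 : ℝ) / n2 := by
    rw [← h2]; push_cast; field_simp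
  have hc3 : ((e : ℝ) + e) / (n : ℝ) = 2 / a := by
    rw [← h3]; push_cast; field_simp; ring
  have hmain : ((dN : ℝ) - 1) / n ≤ ((p1 : ℝ) * d1) / n + ((p2 : ℝ) * d2) / n
      + ((e : ℝ) + e) / n := by
    rw [← add_div, ← add_div]
    apply (div_le_div_iff_of_pos_right hnR).mpr
    have hcast : (dN : ℝ) ≤ (p1 : ℝ) * d1 + (p2 : ℝ) * d2 + ((e : ℝ) + e) := by
      exact_mod_cast hd
    linarith
  rw [hc1, hc2, hc3] at hmain
  have ed1 : (d1 : ℝ) / n1 = ((d1 : ℝ) - 1) / n1 + 1 / n1 := by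
    rw [← add_div, sub_add_cancel]
  have ed2 : (d2 : ℝ) / n2 = ((d2 : ℝ) - 1) / n2 + 1 / n2 := by
    rw [← add_div, sub_add_cancel]
  rw [ed1, ed2] at hmain
  linarith

end RGAux

/-- If a residually finite group `Γ` is generated by finitely generated subgroups
`G₁, G₂` whose intersection `A` is infinite, then for any normal chain `(Γₙ)` (with
`[A : A ∩ Γₙ] → ∞`) one has
`RG(Γ,(Γₙ)) ≤ RG(G₁,(G₁ ∩ Γₙ)) + RG(G₂,(G₂ ∩ Γₙ))`. -/
theorem rank_gradient_amalgam_bound {Γ : Type*} [Group Γ]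
    (hres : ∀ g : Γ, g ≠ 1 → ∃ H : Subgroup Γ, H.Normal ∧ H.FiniteIndex ∧ g ∉ H)
    (G₁ G₂ : Subgroup Γ) (hgen : G₁ ⊔ G₂ = ⊤)
    [Group.FG G₁] [Group.FG G₂] (hAinf : Infinite (G₁ ⊓ G₂ : Subgroup Γ))
    (Γc : ℕ → Subgroup Γ) (hnorm : ∀ n, (Γc n).Normal)
    (hchain : ∀ n, Γc (n + 1) ≤ Γc n) (hfi : ∀ n, (Γc n).FiniteIndex)
    (hA : Tendsto (fun n => ((Γc n).subgroupOf (G₁ ⊓ G₂)).index) atTop atTop)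
    (L L₁ L₂ : ℝ)
    (hL : Tendsto (fun n => ((d (Γc n) : ℝ) - 1) / (Γc n).index) atTop (nhds L))
    (hL₁ : Tendsto (fun n => ((d ((Γc n).subgroupOf G₁) : ℝ) - 1) /
      ((Γc n).subgroupOf G₁).index) atTop (nhds L₁))
    (hL₂ : Tendsto (fun n => ((d ((Γc n).subgroupOf G₂) : ℝ) - 1) /
      ((Γc n).subgroupOf G₂).index) atTop (nhds L₂)) :
    L ≤ L₁ + L₂ := by
  classical
  have hrelpos : ∀ (n : ℕ) (G : Subgroup Γ), ((Γc n).subgroupOf G).index ≠ 0 := by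
    intro n G
    haveI := hnorm n
    haveI := hfi n
    have hdvd : (Γc n).relIndex G ∣ (Γc n).index :=
      Subgroup.relIndex_dvd_index_of_normal (Γc n) G
    intro h0
    rw [show (Γc n).relIndex G = ((Γc n).subgroupOf G).index from rfl, h0] at hdvd
    exact (hfi n).index_ne_zero (zero_dvd_iff.mp hdvd)
  have key_n : ∀ n : ℕ,
      ((d (Γc n) : ℝ) - 1) / (Γc n).index ≤
        (((d ((Γc n).subgroupOf G₁) : ℝ) - 1) / (((Γc n).subgroupOf G₁).index : ℝ))
        + (((d ((Γc n).subgroupOf G₂) : ℝ) - 1) / (((Γc n).subgroupOf G₂).index : ℝ))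
        + (1 / ((((Γc n).subgroupOf G₁).index : ℕ) : ℝ)
           + 1 / ((((Γc n).subgroupOf G₂).index : ℕ) : ℝ)
           + 2 / ((((Γc n).subgroupOf (G₁ ⊓ G₂)).index : ℕ) : ℝ)) := by
    intro n
    haveI := hnorm n
    haveI := hfi n
    haveI h1fi : ((Γc n).subgroupOf G₁).FiniteIndex := ⟨hrelpos n G₁⟩
    haveI h2fi : ((Γc n).subgroupOf G₂).FiniteIndex := ⟨hrelpos n G₂⟩
    obtain ⟨T₁, hT₁card, hT₁cl⟩ := RGAux.exists_d_gen ((Γc n).subgroupOf G₁)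
    obtain ⟨T₂, hT₂card, hT₂cl⟩ := RGAux.exists_d_gen ((Γc n).subgroupOf G₂)
    set j₁ := G₁.subtype.comp ((Γc n).subgroupOf G₁).subtype with hj₁def
    set j₂ := G₂.subtype.comp ((Γc n).subgroupOf G₂).subtype with hj₂def
    set S₁ : Finset Γ := T₁.image j₁ with hS₁def
    set S₂ : Finset Γ := T₂.image j₂ with hS₂def
    have hS₁cl : Subgroup.closure (S₁ : Set Γ) = Γc n ⊓ G₁ := by
      rw [hS₁def, Finset.coe_image, ← MonoidHom.map_closure, hT₁cl,
        ← MonoidHom.range_eq_map, hj₁def, MonoidHom.range_comp,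
        Subgroup.range_subtype, Subgroup.subgroupOf_map_subtype]
    have hS₂cl : Subgroup.closure (S₂ : Set Γ) = Γc n ⊓ G₂ := by
      rw [hS₂def, Finset.coe_image, ← MonoidHom.map_closure, hT₂cl,
        ← MonoidHom.range_eq_map, hj₂def, MonoidHom.range_comp,
        Subgroup.range_subtype, Subgroup.subgroupOf_map_subtype]
    have hkey := RGAux.key (Γc n) G₁ G₂ hgen S₁ S₂ hS₁cl hS₂cl
    have hS₁card : S₁.card ≤ d ((Γc n).subgroupOf G₁) := by
      rw [← hT₁card]; exact Finset.card_image_le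
    have hS₂card : S₂.card ≤ d ((Γc n).subgroupOf G₂) := by
      rw [← hT₂card]; exact Finset.card_image_le
    have hdN : d (Γc n) ≤ (Γc n ⊔ G₁).index * d ((Γc n).subgroupOf G₁)
        + (Γc n ⊔ G₂).index * d ((Γc n).subgroupOf G₂)
        + ((Γc n ⊔ (G₁ ⊓ G₂)).index + (Γc n ⊔ (G₁ ⊓ G₂)).index) :=
      le_trans hkey (Nat.add_le_add (Nat.add_le_add
        (Nat.mul_le_mul_left _ hS₁card) (Nat.mul_le_mul_left _ hS₂card)) le_rfl)
    have hi1 : ((Γc n).subgroupOf G₁).index * (Γc n ⊔ G₁).index = (Γc n).index := by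
      have h := Subgroup.relIndex_mul_index (H := Γc n) (K := Γc n ⊔ G₁) le_sup_left
      rwa [Subgroup.relIndex_sup_left] at h
    have hi2 : ((Γc n).subgroupOf G₂).index * (Γc n ⊔ G₂).index = (Γc n).index := by
      have h := Subgroup.relIndex_mul_index (H := Γc n) (K := Γc n ⊔ G₂) le_sup_left
      rwa [Subgroup.relIndex_sup_left] at h
    have hi3 : ((Γc n).subgroupOf (G₁ ⊓ G₂)).index * (Γc n ⊔ (G₁ ⊓ G₂)).index
        = (Γc n).index := by
      have h := Subgroup.relIndex_mul_index (H := Γc n) (K := Γc n ⊔ (G₁ ⊓ G₂)) le_sup_left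
      rwa [Subgroup.relIndex_sup_left] at h
    exact RGAux.real_step hdN hi1 hi2 hi3 (hfi n).index_ne_zero
  -- limits
  have hle1 : ∀ n, ((Γc n).subgroupOf (G₁ ⊓ G₂)).index ≤ ((Γc n).subgroupOf G₁).index :=
    fun n => Subgroup.relIndex_le_of_le_right inf_le_left (hrelpos n G₁)
  have hle2 : ∀ n, ((Γc n).subgroupOf (G₁ ⊓ G₂)).index ≤ ((Γc n).subgroupOf G₂).index :=
    fun n => Subgroup.relIndex_le_of_le_right inf_le_right (hrelpos n G₂)
  have t1 : Tendsto (fun n => ((((Γc n).subgroupOf G₁).index : ℕ) : ℝ)) atTop atTop :=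
    tendsto_natCast_atTop_atTop.comp (tendsto_atTop_mono hle1 hA)
  have t2 : Tendsto (fun n => ((((Γc n).subgroupOf G₂).index : ℕ) : ℝ)) atTop atTop :=
    tendsto_natCast_atTop_atTop.comp (tendsto_atTop_mono hle2 hA)
  have ta : Tendsto (fun n => ((((Γc n).subgroupOf (G₁ ⊓ G₂)).index : ℕ) : ℝ)) atTop atTop :=
    tendsto_natCast_atTop_atTop.comp hA
  have z1 : Tendsto (fun n => 1 / ((((Γc n).subgroupOf G₁).index : ℕ) : ℝ)) atTop (nhds 0) :=
    tendsto_const_nhds.div_atTop t1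
  have z2 : Tendsto (fun n => 1 / ((((Γc n).subgroupOf G₂).index : ℕ) : ℝ)) atTop (nhds 0) :=
    tendsto_const_nhds.div_atTop t2
  have z3 : Tendsto (fun n => 2 / ((((Γc n).subgroupOf (G₁ ⊓ G₂)).index : ℕ) : ℝ))
      atTop (nhds 0) := tendsto_const_nhds.div_atTop ta
  have herr := (z1.add z2).add z3
  rw [add_zero, add_zero] at herr
  have hRHS := (hL₁.add hL₂).add herr
  rw [add_zero] at hRHS
  exact le_of_tendsto_of_tendsto' hL hRHS key_n
end

section
/- Let Γ = G₁ *_A G₂ be an amalgamated free product with G₁, G₂ finitely generated, and let N ◁ Γ be a normal subgroup of finite index n. Set a = [A : A ∩ N] and kⱼ = [Gⱼ : Gⱼ ∩ N] for j = 1, 2. Then d(N) ≤ (n/k₁)·d(N ∩ G₁) + (n/k₂)·d(N ∩ G₂) + n/a − n/k₁ − n/k₂ + 1. -/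
open Monoid Monoid.PushoutI Subgroup

namespace RB

open scoped Classical

variable {A : Type*} [Group A] {G : Bool → Type*} [∀ i, Group (G i)]
variable (φ : ∀ i, A →* G i) (N : Subgroup (Monoid.PushoutI φ)) [N.Normal]

/-- The quotient map. -/
noncomputable def q : Monoid.PushoutI φ →* (Monoid.PushoutI φ ⧸ N) := QuotientGroup.mk' N

/-- image of `G i` in the quotient -/
noncomputable def Hh (i : Bool) : Subgroup (Monoid.PushoutI φ ⧸ N) := ((q φ N).comp (of i)).range

/-- image of `A` in the quotient -/
noncomputable def Bb : Subgroup (Monoid.PushoutI φ ⧸ N) := ((q φ N).comp (base φ)).range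

lemma Bb_le (i : Bool) : Bb φ N ≤ Hh φ N i := by
  rintro _ ⟨a, rfl⟩
  exact ⟨φ i a, by simp [q, Hh, of_apply_eq_base]⟩

/-- vertices on side `i` -/
abbrev Vv (i : Bool) := (Monoid.PushoutI φ ⧸ N) ⧸ (Hh φ N i)

/-- all vertices -/
abbrev W := Σ i : Bool, Vv φ N i

/-- edges -/
abbrev Ee := (Monoid.PushoutI φ ⧸ N) ⧸ (Bb φ N)

/-- endpoints of an edge -/
noncomputable def pm (i : Bool) : Ee φ N → Vv φ N i := quotientMapOfLE (Bb_le φ N i)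

lemma pm_mk (i : Bool) (x : Monoid.PushoutI φ ⧸ N) :
    pm φ N i (QuotientGroup.mk x) = QuotientGroup.mk x := rfl

/-- vertex of `x` on side `i` -/
noncomputable def vert (i : Bool) (x : Monoid.PushoutI φ ⧸ N) : W φ N :=
  ⟨i, QuotientGroup.mk x⟩

/-- the root vertex -/
noncomputable def root : W φ N := vert φ N true 1

/-- adjacency -/
def adj (u w : W φ N) : Prop := ∃ (i : Bool) (x : Monoid.PushoutI φ ⧸ N),
  u = vert φ N i x ∧ w = vert φ N (!i) x

/-- reachability in `m` steps -/
def Reach : ℕ → W φ N → Prop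
  | 0 => fun w => w = root φ N
  | (m+1) => fun w => ∃ u, adj φ N u w ∧ Reach m u

lemma closure_ranges : Subgroup.closure
    (Set.range (of (φ := φ) true) ∪ Set.range (of (φ := φ) false)) = ⊤ := by
  rw [eq_top_iff]
  intro γ hγ
  clear hγ
  induction γ using Monoid.PushoutI.induction_on with
  | of i g =>
    apply Subgroup.subset_closure
    cases i
    · exact Or.inr ⟨g, rfl⟩
    · exact Or.inl ⟨g, rfl⟩
  | base a =>
    apply Subgroup.subset_closure
    exact Or.inl ⟨φ true a, of_apply_eq_base φ true a⟩
  | mul x y hx hy => exact mul_mem hx hy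

lemma closure_Hh : Subgroup.closure ((↑(Hh φ N true) ∪ ↑(Hh φ N false) : Set (Monoid.PushoutI φ ⧸ N))) = ⊤ := by
  rw [eq_top_iff]
  intro x _
  obtain ⟨γ, rfl⟩ := QuotientGroup.mk'_surjective N x
  have hγ : γ ∈ Subgroup.closure
      (Set.range (of (φ := φ) true) ∪ Set.range (of (φ := φ) false)) := by
    rw [closure_ranges]; trivial
  have : (q φ N) γ ∈ Subgroup.map (q φ N) (Subgroup.closure
      (Set.range (of (φ := φ) true) ∪ Set.range (of (φ := φ) false))) :=
    Subgroup.mem_map_of_mem _ hγ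
  rw [MonoidHom.map_closure] at this
  refine Subgroup.closure_mono ?_ this
  rintro _ ⟨γ', (⟨g, rfl⟩ | ⟨g, rfl⟩), rfl⟩
  · exact Or.inl ⟨g, rfl⟩
  · exact Or.inr ⟨g, rfl⟩

lemma reach_all' (x : Monoid.PushoutI φ ⧸ N) : ∀ j : Bool, ∃ m, Reach φ N m (vert φ N j x) := by
  have hx : x ∈ Subgroup.closure ((↑(Hh φ N true) ∪ ↑(Hh φ N false) : Set (Monoid.PushoutI φ ⧸ N))) := by
    rw [closure_Hh]; trivial
  rw [← Subgroup.mem_toSubmonoid, Subgroup.closure_toSubmonoid] at hx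
  induction hx using Submonoid.closure_induction_right with
  | one =>
    intro j
    cases j with
    | false => exact ⟨1, root φ N, ⟨true, 1, rfl, rfl⟩, rfl⟩
    | true => exact ⟨0, rfl⟩
  | mul_right x hx y hy ih =>
    have hy' : ∃ i : Bool, y ∈ Hh φ N i := by
      rcases hy with (h | h) | h
      · exact ⟨true, h⟩
      · exact ⟨false, h⟩
      · rcases h with (h | h)
        · exact ⟨true, (Hh φ N true).inv_mem_iff.mp h⟩
        · exact ⟨false, (Hh φ N false).inv_mem_iff.mp h⟩
    obtain ⟨i, hyi⟩ := hy'
    have hsame : (QuotientGroup.mk (x * y) : Vv φ N i) = QuotientGroup.mk x := by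
      rw [QuotientGroup.eq]
      simpa using (Hh φ N i).inv_mem hyi
    intro j
    have hji : j = i ∨ j = !i := by cases i <;> cases j <;> simp
    rcases hji with rfl | rfl
    · obtain ⟨m, hm⟩ := ih j
      exact ⟨m, by rwa [vert, hsame]⟩
    · obtain ⟨m, hm⟩ := ih i
      refine ⟨m + 1, vert φ N i (x * y), ⟨i, _, rfl, rfl⟩, ?_⟩
      rwa [vert, hsame]

lemma reach_all (w : W φ N) : ∃ m, Reach φ N m w := by
  obtain ⟨i, v⟩ := w
  obtain ⟨x, rfl⟩ := QuotientGroup.mk_surjective v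
  exact reach_all' φ N x i



/-- distance to the root -/
noncomputable def dist (w : W φ N) : ℕ := sInf {m | Reach φ N m w}

lemma reach_dist (w : W φ N) : Reach φ N (dist φ N w) w := Nat.sInf_mem (reach_all φ N w)

lemma dist_root : dist φ N (root φ N) = 0 :=
  Nat.sInf_eq_zero.mpr (Or.inl rfl)

lemma parent_exists (w : W φ N) (hw : w ≠ root φ N) :
    ∃ x : Monoid.PushoutI φ ⧸ N, w = vert φ N w.1 x ∧
      dist φ N (vert φ N (!w.1) x) < dist φ N w := by
  have hr := reach_dist φ N w
  rcases hd : dist φ N w with _ | m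
  · rw [hd] at hr; exact absurd hr hw
  · rw [hd] at hr
    obtain ⟨u, ⟨i, x, hu, hwx⟩, hru⟩ := hr
    subst hwx
    subst hu
    refine ⟨x, by simp [vert], ?_⟩
    have h1 : dist φ N (vert φ N i x) ≤ m := Nat.sInf_le hru
    have h2 : (!(vert φ N (!i) x).1) = i := Bool.not_not i
    rw [h2]
    omega

/-- helper choice: an element `g` of `G i` moving us into a given edge -/
noncomputable def alph (i : Bool) (gu : Monoid.PushoutI φ) (e : Ee φ N) : G i :=
  if h : ∃ g : G i, (QuotientGroup.mk ((q φ N) (gu * of i g)) : Ee φ N) = e then h.choose else 1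

lemma alph_spec (i : Bool) (gu : Monoid.PushoutI φ) (e : Ee φ N)
    (h : ∃ g : G i, (QuotientGroup.mk ((q φ N) (gu * of i g)) : Ee φ N) = e) :
    (QuotientGroup.mk ((q φ N) (gu * of i (alph φ N i gu e))) : Ee φ N) = e := by
  rw [alph, dif_pos h]; exact h.choose_spec

lemma alph_exists (i : Bool) (gu : Monoid.PushoutI φ) (x : Monoid.PushoutI φ ⧸ N)
    (hco : (QuotientGroup.mk ((q φ N) gu) : Vv φ N i) = QuotientGroup.mk x) :
    ∃ g : G i, (q φ N) (gu * of i g) = x := by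
  rw [QuotientGroup.eq] at hco
  obtain ⟨g, hg⟩ := hco
  refine ⟨g, ?_⟩
  simp only [MonoidHom.coe_comp, Function.comp_apply] at hg
  rw [map_mul, hg]
  group

/-- the well-founded recursion defining the tree representatives -/
noncomputable def gam : W φ N → Monoid.PushoutI φ :=
  (InvImage.wf (dist φ N) Nat.lt_wfRel.wf).fix
    (fun w IH =>
      if hw : w = root φ N then 1 else
        IH (vert φ N (!w.1) (parent_exists φ N w hw).choose)
            (parent_exists φ N w hw).choose_spec.2 *
          of (!w.1) (alph φ N (!w.1)
            (IH (vert φ N (!w.1) (parent_exists φ N w hw).choose)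
              (parent_exists φ N w hw).choose_spec.2)
            (QuotientGroup.mk (parent_exists φ N w hw).choose)))

lemma gam_eq (w : W φ N) : gam φ N w =
    if hw : w = root φ N then 1 else
      gam φ N (vert φ N (!w.1) (parent_exists φ N w hw).choose) *
        of (!w.1) (alph φ N (!w.1)
          (gam φ N (vert φ N (!w.1) (parent_exists φ N w hw).choose))
          (QuotientGroup.mk (parent_exists φ N w hw).choose)) := by
  rw [gam, WellFounded.fix_eq]

lemma gam_root : gam φ N (root φ N) = 1 := by rw [gam_eq, dif_pos rfl]

lemma coset_gam (w : W φ N) :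
    (QuotientGroup.mk ((q φ N) (gam φ N w)) : Vv φ N w.1) = w.2 := by
  suffices h : ∀ m, ∀ w : W φ N, dist φ N w = m →
      (QuotientGroup.mk ((q φ N) (gam φ N w)) : Vv φ N w.1) = w.2 from h _ w rfl
  intro m
  induction m using Nat.strong_induction_on with
  | _ m ih =>
  intro w hd
  obtain ⟨i, v⟩ := w
  by_cases hw : (⟨i, v⟩ : W φ N) = root φ N
  · rw [hw, gam_root, map_one]
    rfl
  · rw [gam_eq, dif_neg hw]
    set x := (parent_exists φ N (⟨i, v⟩ : W φ N) hw).choose with hx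
    obtain ⟨hwv, hlt⟩ := (parent_exists φ N (⟨i, v⟩ : W φ N) hw).choose_spec
    set u := vert φ N (!(⟨i, v⟩ : W φ N).1) x with hu
    have hcu : (QuotientGroup.mk ((q φ N) (gam φ N u)) : Vv φ N (!i)) = QuotientGroup.mk x := by
      have := ih _ (hd ▸ hlt) u rfl
      exact this
    have hex : ∃ g : G (!i),
        (QuotientGroup.mk ((q φ N) (gam φ N u * of (!i) g)) : Ee φ N) = QuotientGroup.mk x := by
      obtain ⟨g, hg⟩ := alph_exists φ N (!i) (gam φ N u) x hcu
      exact ⟨g, by rw [hg]⟩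
    have hsp := alph_spec φ N (!i) (gam φ N u) (QuotientGroup.mk x) hex
    have hfin := congrArg (pm φ N i) hsp
    rw [pm_mk, pm_mk] at hfin
    have hv : v = (QuotientGroup.mk x : Vv φ N i) := by
      rw [vert] at hwv
      exact eq_of_heq (Sigma.mk.inj_iff.mp hwv).2
    exact hfin.trans hv.symm

/-- the parent edge of a non-root vertex -/
noncomputable def par (w : W φ N) (hw : w ≠ root φ N) : Ee φ N :=
  QuotientGroup.mk (parent_exists φ N w hw).choose

lemma par_spec (w : W φ N) (hw : w ≠ root φ N) :
    ∃ x : Monoid.PushoutI φ ⧸ N, par φ N w hw = QuotientGroup.mk x ∧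
      w = vert φ N w.1 x ∧
      dist φ N (vert φ N (!w.1) x) < dist φ N w ∧
      gam φ N w = gam φ N (vert φ N (!w.1) x) *
        of (!w.1) (alph φ N (!w.1) (gam φ N (vert φ N (!w.1) x)) (QuotientGroup.mk x)) ∧
      (QuotientGroup.mk ((q φ N) (gam φ N w)) : Ee φ N) = QuotientGroup.mk x := by
  refine ⟨(parent_exists φ N w hw).choose, rfl,
    (parent_exists φ N w hw).choose_spec.1, (parent_exists φ N w hw).choose_spec.2, ?_, ?_⟩
  · rw [gam_eq, dif_neg hw]
  · set x := (parent_exists φ N w hw).choose with hx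
    set u := vert φ N (!w.1) x with hu
    have hcu : (QuotientGroup.mk ((q φ N) (gam φ N u)) : Vv φ N (!w.1)) = QuotientGroup.mk x :=
      coset_gam φ N u
    have hex : ∃ g : G (!w.1),
        (QuotientGroup.mk ((q φ N) (gam φ N u * of (!w.1) g)) : Ee φ N) = QuotientGroup.mk x := by
      obtain ⟨g, hg⟩ := alph_exists φ N (!w.1) (gam φ N u) x hcu
      exact ⟨g, by rw [hg]⟩
    have hsp := alph_spec φ N (!w.1) (gam φ N u) (QuotientGroup.mk x) hex
    rw [gam_eq, dif_neg hw]
    exact hsp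

/-- the vertex of an edge on side `i` -/
noncomputable def vertE (i : Bool) (e : Ee φ N) : W φ N := ⟨i, pm φ N i e⟩

lemma ced_exists (e : Ee φ N) : ∃ c : ∀ i, G i,
    (q φ N) (gam φ N (vertE φ N true e) * of true (c true)) =
      (q φ N) (gam φ N (vertE φ N false e) * of false (c false)) ∧
    (QuotientGroup.mk ((q φ N) (gam φ N (vertE φ N true e) * of true (c true))) : Ee φ N) = e ∧
    ((∃ (w : W φ N) (hw : w ≠ root φ N), par φ N w hw = e) →
      gam φ N (vertE φ N true e) * of true (c true) =
        gam φ N (vertE φ N false e) * of false (c false)) := by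
  by_cases hpar : ∃ (w : W φ N) (hw : w ≠ root φ N), par φ N w hw = e
  · obtain ⟨w, hw, hpe⟩ := hpar
    obtain ⟨x, hpx, hwv, _, hgam, hB⟩ := par_spec φ N w hw
    subst hpe
    rw [hpx]
    cases hw1 : w.1 with
    | true =>
      rw [hw1] at hwv hgam
      simp only [Bool.not_true] at hgam
      refine ⟨Bool.rec (alph φ N false (gam φ N (vert φ N false x)) (QuotientGroup.mk x)) 1,
        ?_, ?_, ?_⟩
      · show (q φ N) (gam φ N (vert φ N true x) * of true 1) =
          (q φ N) (gam φ N (vert φ N false x) * of false _)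
        rw [map_one, mul_one, ← hwv]
        exact congrArg (q φ N) hgam
      · show (QuotientGroup.mk ((q φ N) (gam φ N (vert φ N true x) * of true 1)) : Ee φ N) = _
        rw [map_one, mul_one, ← hwv]
        exact hB
      · intro _
        show gam φ N (vert φ N true x) * of true 1 = gam φ N (vert φ N false x) * of false _
        rw [map_one, mul_one, ← hwv]
        exact hgam
    | false =>
      rw [hw1] at hwv hgam
      simp only [Bool.not_false] at hgam
      refine ⟨Bool.rec 1 (alph φ N true (gam φ N (vert φ N true x)) (QuotientGroup.mk x)),
        ?_, ?_, ?_⟩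
      · show (q φ N) (gam φ N (vert φ N true x) * of true _) =
          (q φ N) (gam φ N (vert φ N false x) * of false 1)
        rw [map_one, mul_one, ← hwv]
        exact (congrArg (q φ N) hgam).symm
      · show (QuotientGroup.mk ((q φ N) (gam φ N (vert φ N true x) * of true _)) : Ee φ N) = _
        exact hgam ▸ hB
      · intro _
        show gam φ N (vert φ N true x) * of true _ = gam φ N (vert φ N false x) * of false 1
        rw [map_one, mul_one, ← hwv]
        exact hgam.symm
  · obtain ⟨x, rfl⟩ := QuotientGroup.mk_surjective e
    have key : ∀ i : Bool, ∃ g : G i,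
        (q φ N) (gam φ N (vertE φ N i (QuotientGroup.mk x)) * of i g) = x := by
      intro i
      exact alph_exists φ N i _ x (coset_gam φ N (vert φ N i x))
    obtain ⟨gt, hgt⟩ := key true
    obtain ⟨gf, hgf⟩ := key false
    refine ⟨Bool.rec gf gt, ?_, ?_, fun h => absurd h hpar⟩
    · show (q φ N) (gam φ N (vertE φ N true _) * of true gt) =
        (q φ N) (gam φ N (vertE φ N false _) * of false gf)
      rw [hgt, hgf]
    · show (QuotientGroup.mk ((q φ N) (gam φ N (vertE φ N true _) * of true gt)) : Ee φ N) = _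
      rw [hgt]

/-- edge gluing data -/
noncomputable def ced (e : Ee φ N) : ∀ i, G i := (ced_exists φ N e).choose

/-- the edge elements of the subgroup -/
noncomputable def sed (e : Ee φ N) : Monoid.PushoutI φ :=
  gam φ N (vertE φ N true e) * of true (ced φ N e true) *
    (gam φ N (vertE φ N false e) * of false (ced φ N e false))⁻¹

lemma sed_mem (e : Ee φ N) : sed φ N e ∈ N := by
  have h1 := (ced_exists φ N e).choose_spec.1
  have hq : (q φ N) (sed φ N e) = 1 := by
    rw [sed, map_mul, map_inv]
    rw [show (ced_exists φ N e).choose = ced φ N e from rfl] at h1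
    rw [h1, mul_inv_cancel]
  exact (QuotientGroup.eq_one_iff _).mp hq

lemma sed_par (w : W φ N) (hw : w ≠ root φ N) : sed φ N (par φ N w hw) = 1 := by
  have h3 := (ced_exists φ N (par φ N w hw)).choose_spec.2.2 ⟨w, hw, rfl⟩
  rw [show (ced_exists φ N (par φ N w hw)).choose = ced φ N (par φ N w hw) from rfl] at h3
  rw [sed, h3, mul_inv_cancel]

lemma edge_coset (e : Ee φ N) (i : Bool) :
    (QuotientGroup.mk ((q φ N) (gam φ N (vertE φ N i e) * of i (ced φ N e i))) : Ee φ N) = e := by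
  have h1 := (ced_exists φ N e).choose_spec.1
  have h2 := (ced_exists φ N e).choose_spec.2.1
  rw [show (ced_exists φ N e).choose = ced φ N e from rfl] at h1 h2
  cases i
  · rw [← h1]; exact h2
  · exact h2

lemma cross_sed (i : Bool) (e : Ee φ N) : ∃ t : Monoid.PushoutI φ,
    (t = sed φ N e ∨ t = (sed φ N e)⁻¹) ∧
    gam φ N (vertE φ N i e) * of i (ced φ N e i) =
      t * (gam φ N (vertE φ N (!i) e) * of (!i) (ced φ N e (!i))) := by
  cases i
  · refine ⟨(sed φ N e)⁻¹, Or.inr rfl, ?_⟩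
    show gam φ N (vertE φ N false e) * of false (ced φ N e false) =
      (sed φ N e)⁻¹ * (gam φ N (vertE φ N true e) * of true (ced φ N e true))
    rw [sed]
    group
  · refine ⟨sed φ N e, Or.inl rfl, ?_⟩
    show gam φ N (vertE φ N true e) * of true (ced φ N e true) =
      sed φ N e * (gam φ N (vertE φ N false e) * of false (ced φ N e false))
    rw [sed]
    group

section Gen

variable (T : ∀ i, Set (G i))

/-- the full generating set -/
noncomputable def genSet : Set (Monoid.PushoutI φ) :=
  (⋃ (i : Bool) (v : Vv φ N i),
    (fun t => gam φ N ⟨i, v⟩ * of i t * (gam φ N ⟨i, v⟩)⁻¹) '' (T i)) ∪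
  Set.range (sed φ N)

/-- the subgroup generated -/
noncomputable def Sgrp : Subgroup (Monoid.PushoutI φ) := Subgroup.closure (genSet φ N T)

variable (hT : ∀ i, Subgroup.closure (T i) = N.comap (of (φ := φ) i))

include hT

lemma Sgrp_le : Sgrp φ N T ≤ N := by
  rw [Sgrp, Subgroup.closure_le]
  rintro γ (hγ | ⟨e, rfl⟩)
  · simp only [Set.mem_iUnion] at hγ
    obtain ⟨i, v, t, ht, rfl⟩ := hγ
    have h1 : of i t ∈ N := by
      have : t ∈ N.comap (of (φ := φ) i) := by
        rw [← hT i]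
        exact Subgroup.subset_closure ht
      exact this
    exact (inferInstance : N.Normal).conj_mem _ h1 _
  · exact sed_mem φ N e

lemma conj_mem_Sgrp (i : Bool) (v : Vv φ N i) (g : G i) (hg : of i g ∈ N) :
    gam φ N ⟨i, v⟩ * of i g * (gam φ N ⟨i, v⟩)⁻¹ ∈ Sgrp φ N T := by
  set ψ : G i →* Monoid.PushoutI φ :=
    (MulAut.conj (gam φ N ⟨i, v⟩)).toMonoidHom.comp (of i) with hψ
  have hgM : g ∈ Subgroup.closure (T i) := by rw [hT i]; exact hg
  have h2 : ψ g ∈ Subgroup.map ψ (Subgroup.closure (T i)) := Subgroup.mem_map_of_mem _ hgM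
  rw [MonoidHom.map_closure] at h2
  have h3 : Subgroup.closure (⇑ψ '' T i) ≤ Sgrp φ N T := by
    rw [Subgroup.closure_le]
    intro y hy
    apply Subgroup.subset_closure
    left
    simp only [Set.mem_iUnion]
    exact ⟨i, v, hy⟩
  exact h3 h2

omit hT in
lemma sed_mem_Sgrp (e : Ee φ N) : sed φ N e ∈ Sgrp φ N T :=
  Subgroup.subset_closure (Or.inr ⟨e, rfl⟩)

lemma cross (i : Bool) (v : Vv φ N i) (h : G i) (s : Monoid.PushoutI φ) (hs : s ∈ Sgrp φ N T) :
    ∃ s' ∈ Sgrp φ N T, ∃ (w : Vv φ N (!i)) (h' : G (!i)),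
      s * gam φ N ⟨i, v⟩ * of i h = s' * gam φ N ⟨!i, w⟩ * of (!i) h' := by
  set γv := gam φ N ⟨i, v⟩ with hγv
  set x := (q φ N) (γv * of i h) with hx
  set e : Ee φ N := QuotientGroup.mk x with he
  have claim1 : vertE φ N i e = ⟨i, v⟩ := by
    rw [vertE, he, pm_mk]
    congr 1
    rw [hx, map_mul]
    rw [QuotientGroup.mk_mul_of_mem _ (⟨h, rfl⟩ : (q φ N) (of i h) ∈ Hh φ N i)]
    exact coset_gam φ N ⟨i, v⟩
  have hec := edge_coset φ N e i
  rw [claim1] at hec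
  -- hec : mk (q (γv * of i (ced e i))) = e = mk x
  have hy : ((q φ N) (γv * of i (ced φ N e i)))⁻¹ * x ∈ Bb φ N := by
    rw [← QuotientGroup.eq]
    exact hec
  obtain ⟨aa, haa⟩ := hy
  simp only [MonoidHom.coe_comp, Function.comp_apply] at haa
  -- μ ∈ N
  set μ : Monoid.PushoutI φ := of i ((ced φ N e i)⁻¹ * h * (φ i aa)⁻¹) with hμ
  have hμN : μ ∈ N := by
    have hμ2 : μ = (γv * of i (ced φ N e i))⁻¹ * (γv * of i h) * (base φ aa)⁻¹ := by
      rw [hμ, ← of_apply_eq_base φ i aa]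
      simp only [map_mul, map_inv]
      group
    have : (q φ N) μ = 1 := by
      rw [hμ2, map_mul, map_mul, map_inv, map_inv, ← hx, haa]
      group
    exact (QuotientGroup.eq_one_iff _).mp this
  have hofh : of i h = of i (ced φ N e i) * μ * base φ aa := by
    rw [hμ, ← of_apply_eq_base φ i aa]
    simp only [← map_mul]
    congr 1
    group
  -- inner conjugate
  set g' : G i := ced φ N e i * ((ced φ N e i)⁻¹ * h * (φ i aa)⁻¹) * (ced φ N e i)⁻¹ with hg'
  have hofg' : of i g' = of i (ced φ N e i) * μ * (of i (ced φ N e i))⁻¹ := by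
    rw [hμ]
    simp only [← map_mul, ← map_inv]
    congr 1
    rw [hg']
    simp only [map_inv]
  have hg'N : of i g' ∈ N := by
    rw [hofg']
    exact (inferInstance : N.Normal).conj_mem _ hμN _
  have hbr : γv * of i g' * γv⁻¹ ∈ Sgrp φ N T := conj_mem_Sgrp φ N T hT i v g' hg'N
  obtain ⟨t, htS, hcr⟩ := cross_sed φ N i e
  rw [claim1] at hcr
  have htmem : t ∈ Sgrp φ N T := by
    rcases htS with rfl | rfl
    · exact sed_mem_Sgrp φ N T e
    · exact (Sgrp φ N T).inv_mem (sed_mem_Sgrp φ N T e)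
  refine ⟨s * (γv * of i g' * γv⁻¹) * t, by
      exact mul_mem (mul_mem hs hbr) htmem,
    pm φ N (!i) e, ced φ N e (!i) * φ (!i) aa, ?_⟩
  have hvE : gam φ N (vertE φ N (!i) e) = gam φ N ⟨!i, pm φ N (!i) e⟩ := rfl
  have hfinal : of (!i) (ced φ N e (!i)) * base φ aa =
      of (!i) (ced φ N e (!i) * φ (!i) aa) := by
    rw [map_mul, of_apply_eq_base φ (!i) aa]
  calc s * γv * of i h
      = s * γv * (of i (ced φ N e i) * μ * base φ aa) := by rw [← hofh]
    _ = s * (γv * of i g' * γv⁻¹) * ((γv * of i (ced φ N e i)) * base φ aa) := by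
        rw [hofg']
        group
    _ = s * (γv * of i g' * γv⁻¹) * (t * (gam φ N (vertE φ N (!i) e) *
          of (!i) (ced φ N e (!i))) * base φ aa) := by rw [← hcr]
    _ = s * (γv * of i g' * γv⁻¹) * t * gam φ N ⟨!i, pm φ N (!i) e⟩ *
          (of (!i) (ced φ N e (!i)) * base φ aa) := by rw [hvE]; group
    _ = s * (γv * of i g' * γv⁻¹) * t * gam φ N ⟨!i, pm φ N (!i) e⟩ *
          of (!i) (ced φ N e (!i) * φ (!i) aa) := by rw [hfinal]

lemma invariant (γ : Monoid.PushoutI φ) :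
    ∃ s ∈ Sgrp φ N T, ∃ (v : Vv φ N true) (h : G true),
      γ = s * gam φ N ⟨true, v⟩ * of true h := by
  have hbase : ∃ s ∈ Sgrp φ N T, ∃ (v : Vv φ N true) (h : G true),
      (1 : Monoid.PushoutI φ) = s * gam φ N ⟨true, v⟩ * of true h := by
    refine ⟨1, one_mem _, QuotientGroup.mk 1, 1, ?_⟩
    have : (⟨true, QuotientGroup.mk 1⟩ : W φ N) = root φ N := rfl
    rw [this, gam_root, map_one, one_mul, one_mul]
  have hstep : ∀ (γ : Monoid.PushoutI φ),
      (∃ s ∈ Sgrp φ N T, ∃ (v : Vv φ N true) (h : G true),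
        γ = s * gam φ N ⟨true, v⟩ * of true h) →
      ∀ (j : Bool) (g : G j),
      ∃ s ∈ Sgrp φ N T, ∃ (v : Vv φ N true) (h : G true),
        γ * of j g = s * gam φ N ⟨true, v⟩ * of true h := by
    rintro γ ⟨s, hs, v, h, rfl⟩ j g
    cases j with
    | true =>
      exact ⟨s, hs, v, h * g, by rw [map_mul, mul_assoc]⟩
    | false =>
      obtain ⟨s', hs', w, h', heq⟩ := cross φ N T hT true v h s hs
      have heq2 : s * gam φ N ⟨true, v⟩ * of true h =
          s' * gam φ N ⟨false, (show Vv φ N false from w)⟩ * of false (show G false from h') := heq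
      obtain ⟨s'', hs'', w', h'', heq'⟩ :=
        cross φ N T hT false (show Vv φ N false from w) ((show G false from h') * g) s' hs'
      have heq3 : s' * gam φ N ⟨false, (show Vv φ N false from w)⟩ * of false ((show G false from h') * g) =
          s'' * gam φ N ⟨true, (show Vv φ N true from w')⟩ * of true (show G true from h'') := heq'
      refine ⟨s'', hs'', (show Vv φ N true from w'), (show G true from h''), ?_⟩
      calc s * gam φ N ⟨true, v⟩ * of true h * of false g
          = s' * gam φ N ⟨false, (show Vv φ N false from w)⟩ * (of false (show G false from h') *
              of false g) := by rw [heq2]; group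
        _ = s' * gam φ N ⟨false, (show Vv φ N false from w)⟩ * of false ((show G false from h') * g) := by
              rw [map_mul]
        _ = s'' * gam φ N ⟨true, (show Vv φ N true from w')⟩ * of true (show G true from h'') := heq3
  -- now induct over the generators
  have hγ : γ ∈ Subgroup.closure
      (Set.range (of (φ := φ) true) ∪ Set.range (of (φ := φ) false)) := by
    rw [closure_ranges]; trivial
  rw [← Subgroup.mem_toSubmonoid, Subgroup.closure_toSubmonoid] at hγ
  induction hγ using Submonoid.closure_induction_right with
  | one => exact hbase
  | mul_right x hx y hy ih =>
    have hy' : ∃ (j : Bool) (g : G j), y = of j g := by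
      rcases hy with (⟨g, rfl⟩ | ⟨g, rfl⟩) | hinv
      · exact ⟨true, g, rfl⟩
      · exact ⟨false, g, rfl⟩
      · rcases hinv with (⟨g, hg⟩ | ⟨g, hg⟩)
        · exact ⟨true, g⁻¹, by rw [map_inv, hg, inv_inv]⟩
        · exact ⟨false, g⁻¹, by rw [map_inv, hg, inv_inv]⟩
    obtain ⟨j, g, rfl⟩ := hy'
    exact hstep x ih j g

lemma N_le_Sgrp : N ≤ Sgrp φ N T := by
  intro γ hγ
  obtain ⟨s, hs, v, h, rfl⟩ := invariant φ N T hT γ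
  have hsN : s ∈ N := Sgrp_le φ N T hT hs
  have hq1 : (q φ N) (gam φ N ⟨true, v⟩ * of true h) = 1 := by
    have h1 : (q φ N) (s * gam φ N ⟨true, v⟩ * of true h) = 1 :=
      (QuotientGroup.eq_one_iff _).mpr hγ
    have h2 : (q φ N) s = 1 := (QuotientGroup.eq_one_iff _).mpr hsN
    rw [mul_assoc, map_mul, h2, one_mul] at h1
    exact h1
  have hv : v = QuotientGroup.mk 1 := by
    have h3 : v = (QuotientGroup.mk ((q φ N) (gam φ N ⟨true, v⟩)) : Vv φ N true) :=
      (coset_gam φ N ⟨true, v⟩).symm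
    rw [h3]
    have h4 : (QuotientGroup.mk ((q φ N) (gam φ N ⟨true, v⟩)) : Vv φ N true) =
        QuotientGroup.mk ((q φ N) (gam φ N ⟨true, v⟩ * of true h)) := by
      rw [map_mul]
      exact (QuotientGroup.mk_mul_of_mem _ (⟨h, rfl⟩ : (q φ N) (of true h) ∈ Hh φ N true)).symm
    rw [h4, hq1]
  subst hv
  have hroot : (⟨true, (QuotientGroup.mk 1 : Vv φ N true)⟩ : W φ N) = root φ N := rfl
  rw [hroot, gam_root, mul_one]
  have hofh : of (φ := φ) true h ∈ N := by
    apply (QuotientGroup.eq_one_iff _).mp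
    rw [hroot, gam_root, one_mul] at hq1
    exact hq1
  have hconj := conj_mem_Sgrp φ N T hT true (QuotientGroup.mk 1) h hofh
  rw [hroot, gam_root, one_mul, inv_one, mul_one] at hconj
  exact mul_mem hs hconj

end Gen

section Counting

variable [N.FiniteIndex]

lemma finQ : Finite (Monoid.PushoutI φ ⧸ N) :=
  Nat.finite_of_card_ne_zero Subgroup.FiniteIndex.index_ne_zero

/-- parent edge assignment as a function on non-root vertices -/
noncomputable def Par : {w : W φ N // w ≠ root φ N} → Ee φ N := fun p => par φ N p.1 p.2

omit [N.FiniteIndex] in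
lemma par_vert (w : W φ N) (hw : w ≠ root φ N) :
    vertE φ N w.1 (par φ N w hw) = w ∧
    dist φ N (vertE φ N (!w.1) (par φ N w hw)) < dist φ N w := by
  obtain ⟨x, hpx, hwv, hlt, -, -⟩ := par_spec φ N w hw
  rw [hpx]
  exact ⟨hwv.symm, hlt⟩

omit [N.FiniteIndex] in
lemma Par_inj : Function.Injective (Par φ N) := by
  rintro ⟨w, hw⟩ ⟨w', hw'⟩ hpe
  simp only [Par] at hpe
  have h1 := par_vert φ N w hw
  have h2 := par_vert φ N w' hw'
  rw [hpe] at h1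
  by_cases hww : w.1 = w'.1
  · refine Subtype.ext ?_
    have hmid : vertE φ N w.1 (par φ N w' hw') = vertE φ N w'.1 (par φ N w' hw') := by
      rw [hww]
    exact h1.1.symm.trans (hmid.trans h2.1)
  · exfalso
    have hb : w'.1 = !w.1 := by
      revert hww; cases hq1 : w.1 <;> cases hq2 : w'.1 <;> simp
    have hA : dist φ N w' < dist φ N w := by
      have h3 := h1.2
      rw [← hb] at h3
      rw [h2.1] at h3
      exact h3
    have hB : dist φ N w < dist φ N w' := by
      have h4 := h2.2
      have hb' : (!w'.1) = w.1 := by rw [hb, Bool.not_not]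
      rw [hb'] at h4
      rw [h1.1] at h4
      exact h4
    omega

lemma card_W_le : Nat.card (W φ N) ≤ Nat.card (Ee φ N) + 1 := by
  haveI := finQ φ N
  letI : Fintype (W φ N) := Fintype.ofFinite _
  letI : Fintype (Ee φ N) := Fintype.ofFinite _
  have hinj := Nat.card_le_card_of_injective _ (Par_inj φ N)
  have hcompl : Fintype.card {w : W φ N // ¬ w = root φ N} =
      Fintype.card (W φ N) - Fintype.card {w : W φ N // w = root φ N} :=
    Fintype.card_subtype_compl _
  rw [Fintype.card_subtype_eq] at hcompl
  have h1 : Nat.card {w : W φ N // w ≠ root φ N} = Nat.card (W φ N) - 1 := by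
    rw [Nat.card_eq_fintype_card, Nat.card_eq_fintype_card, hcompl]
  have hpos : 0 < Nat.card (W φ N) := Nat.card_pos
  omega

lemma main_count (T : ∀ i, Finset (G i))
    (hT : ∀ i, Subgroup.closure ((T i : Set (G i))) = N.comap (of (φ := φ) i)) :
    d ↥N ≤ Nat.card (Vv φ N true) * (T true).card + Nat.card (Vv φ N false) * (T false).card
        + (Nat.card (Ee φ N) - (Nat.card (W φ N) - 1)) := by
  haveI := finQ φ N
  have hTsub : ∀ i, ∀ t ∈ T i, of (φ := φ) i t ∈ N := by
    intro i t ht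
    have : t ∈ N.comap (of (φ := φ) i) := by
      rw [← hT i]; exact Subgroup.subset_closure ht
    exact this
  set I1 : Type _ := (Vv φ N true × {x // x ∈ T true}) ⊕ (Vv φ N false × {x // x ∈ T false})
    with hI1
  set I2 : Type _ := {e : Ee φ N // e ∉ Set.range (Par φ N)} with hI2
  set ff : I1 ⊕ I2 → ↥N := fun z =>
    match z with
    | .inl (.inl ⟨v, t⟩) => ⟨gam φ N ⟨true, v⟩ * of true t.1 * (gam φ N ⟨true, v⟩)⁻¹,
        (inferInstance : N.Normal).conj_mem _ (hTsub true t.1 t.2) _⟩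
    | .inl (.inr ⟨v, t⟩) => ⟨gam φ N ⟨false, v⟩ * of false t.1 * (gam φ N ⟨false, v⟩)⁻¹,
        (inferInstance : N.Normal).conj_mem _ (hTsub false t.1 t.2) _⟩
    | .inr e => ⟨sed φ N e.1, sed_mem φ N e.1⟩
    with hff
  letI : Fintype (I1 ⊕ I2) := Fintype.ofFinite _
  set F : Finset ↥N := Finset.image ff Finset.univ with hF
  -- the image generates N
  have himg : Subgroup.closure ((N.subtype '' (F : Set ↥N))) = N := by
    apply le_antisymm
    · rw [Subgroup.closure_le]
      rintro _ ⟨y, _, rfl⟩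
      exact y.2
    · have hN : N ≤ Sgrp φ N (fun i => (T i : Set (G i))) :=
        N_le_Sgrp φ N (fun i => (T i : Set (G i))) hT
      refine le_trans hN ?_
      rw [Sgrp, Subgroup.closure_le]
      rintro γ (hv | ⟨e, rfl⟩)
      · simp only [Set.mem_iUnion] at hv
        obtain ⟨i, v, t, ht, rfl⟩ := hv
        apply Subgroup.subset_closure
        cases i with
        | true =>
          refine ⟨ff (.inl (.inl ⟨v, ⟨t, ht⟩⟩)), by
            rw [hF]
            apply Finset.mem_coe.mpr
            apply Finset.mem_image_of_mem
            exact Finset.mem_univ _, rfl⟩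
        | false =>
          refine ⟨ff (.inl (.inr ⟨v, ⟨t, ht⟩⟩)), by
            rw [hF]
            apply Finset.mem_coe.mpr
            apply Finset.mem_image_of_mem
            exact Finset.mem_univ _, rfl⟩
      · by_cases he : e ∈ Set.range (Par φ N)
        · obtain ⟨⟨w, hw⟩, rfl⟩ := he
          have hsp := sed_par φ N w hw
          rw [show Par φ N ⟨w, hw⟩ = par φ N w hw from rfl, hsp]
          exact one_mem _
        · refine Subgroup.subset_closure ⟨ff (.inr ⟨e, he⟩), by
            rw [hF]
            apply Finset.mem_coe.mpr
            apply Finset.mem_image_of_mem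
            exact Finset.mem_univ _, rfl⟩
  have hclos : Subgroup.closure ((F : Set ↥N)) = ⊤ := by
    apply Subgroup.map_injective N.subtype_injective
    rw [MonoidHom.map_closure, himg, ← MonoidHom.range_eq_map, Subgroup.subtype_range]
  have hdle : d ↥N ≤ F.card := Nat.sInf_le ⟨F, rfl, hclos⟩
  have hcard : F.card ≤ Nat.card (I1 ⊕ I2) := by
    rw [Nat.card_eq_fintype_card]
    calc F.card ≤ Finset.univ.card := Finset.card_image_le
      _ = Fintype.card (I1 ⊕ I2) := Finset.card_univ
  have hc1 : Nat.card I1 = Nat.card (Vv φ N true) * (T true).card +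
      Nat.card (Vv φ N false) * (T false).card := by
    rw [hI1, Nat.card_sum, Nat.card_prod, Nat.card_prod]
    congr 1
    · congr 1
      exact (Nat.card_eq_fintype_card).trans (Fintype.card_coe _)
    · congr 1
      exact (Nat.card_eq_fintype_card).trans (Fintype.card_coe _)
  have hc2 : Nat.card I2 = Nat.card (Ee φ N) - (Nat.card (W φ N) - 1) := by
    letI : Fintype (Ee φ N) := Fintype.ofFinite _
    letI : Fintype (W φ N) := Fintype.ofFinite _
    have hcompl : Fintype.card {e : Ee φ N // ¬ e ∈ Set.range (Par φ N)} =
        Fintype.card (Ee φ N) - Fintype.card {e : Ee φ N // e ∈ Set.range (Par φ N)} :=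
      Fintype.card_subtype_compl _
    have hr : Nat.card {e : Ee φ N // e ∈ Set.range (Par φ N)} =
        Nat.card {w : W φ N // w ≠ root φ N} := by
      rw [show {e : Ee φ N // e ∈ Set.range (Par φ N)} = ↥(Set.range (Par φ N)) from rfl]
      exact Nat.card_range_of_injective (Par_inj φ N)
    have hwcompl : Fintype.card {w : W φ N // ¬ w = root φ N} =
        Fintype.card (W φ N) - Fintype.card {w : W φ N // w = root φ N} :=
      Fintype.card_subtype_compl _
    rw [Fintype.card_subtype_eq] at hwcompl
    rw [Nat.card_eq_fintype_card, Nat.card_eq_fintype_card] at hr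
    rw [hI2, Nat.card_eq_fintype_card, Nat.card_eq_fintype_card, Nat.card_eq_fintype_card,
      hcompl, hr, hwcompl]
  have hsum : Nat.card (I1 ⊕ I2) = Nat.card I1 + Nat.card I2 := Nat.card_sum
  omega

omit [N.FiniteIndex] in
lemma comap_of_eq_ker (i : Bool) :
    N.comap (of (φ := φ) i) = ((q φ N).comp (of (φ := φ) i)).ker := by
  have : ((q φ N).comp (of (φ := φ) i)).ker = (q φ N).ker.comap (of (φ := φ) i) := rfl
  rw [this, q, QuotientGroup.ker_mk']

omit [N.FiniteIndex] in
lemma comap_base_eq_ker :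
    N.comap (base φ) = ((q φ N).comp (base φ)).ker := by
  have : ((q φ N).comp (base φ)).ker = (q φ N).ker.comap (base φ) := rfl
  rw [this, q, QuotientGroup.ker_mk']

omit [N.FiniteIndex] in
lemma card_Hh (i : Bool) : Nat.card (Hh φ N i) = (N.comap (of (φ := φ) i)).index := by
  rw [comap_of_eq_ker, Subgroup.index_ker]
  rfl

omit [N.FiniteIndex] in
lemma card_Bb : Nat.card (Bb φ N) = (N.comap (base φ)).index := by
  rw [comap_base_eq_ker, Subgroup.index_ker]
  rfl

omit [N.FiniteIndex] in
lemma lagrange_V (i : Bool) :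
    N.index = Nat.card (Vv φ N i) * (N.comap (of (φ := φ) i)).index := by
  rw [← card_Hh]
  exact Subgroup.card_eq_card_quotient_mul_card_subgroup _

omit [N.FiniteIndex] in
lemma lagrange_E :
    N.index = Nat.card (Ee φ N) * (N.comap (base φ)).index := by
  rw [← card_Bb]
  exact Subgroup.card_eq_card_quotient_mul_card_subgroup _

lemma card_W_eq : Nat.card (W φ N) = Nat.card (Vv φ N true) + Nat.card (Vv φ N false) := by
  haveI := finQ φ N
  have e : W φ N ≃ (Vv φ N true ⊕ Vv φ N false) :=
    { toFun := fun w => match w with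
        | ⟨true, v⟩ => .inl v
        | ⟨false, v⟩ => .inr v
      invFun := fun z => match z with
        | .inl v => ⟨true, v⟩
        | .inr v => ⟨false, v⟩
      left_inv := by rintro ⟨i, v⟩; cases i <;> rfl
      right_inv := by rintro (v | v) <;> rfl }
  rw [Nat.card_congr e, Nat.card_sum]

end Counting

end RB


lemma d_le {G : Type*} [Group G] (S : Finset G) (h : Subgroup.closure (S : Set G) = ⊤) :
    d G ≤ S.card := Nat.sInf_le ⟨S, rfl, h⟩

lemma d_spec (G : Type*) [Group G] [hFG : Group.FG G] :
    ∃ S : Finset G, S.card = d G ∧ Subgroup.closure (S : Set G) = ⊤ := by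
  have hne : {n | ∃ S : Finset G, S.card = n ∧ Subgroup.closure (S : Set G) = ⊤}.Nonempty := by
    obtain ⟨n, S, hc, hcl⟩ := Group.fg_iff'.mp hFG
    exact ⟨n, S, hc, hcl⟩
  exact Nat.sInf_mem hne

lemma index_comap_ne_zero {H Γ' : Type*} [Group H] [Group Γ'] (N : Subgroup Γ') [N.Normal]
    (hN : N.index ≠ 0) (f : H →* Γ') : (N.comap f).index ≠ 0 := by
  rw [Subgroup.index_comap]
  intro h0
  have hdvd := Subgroup.relIndex_dvd_index_of_normal N f.range
  rw [h0] at hdvd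
  exact hN (Nat.eq_zero_of_zero_dvd hdvd)

open Monoid in
/-- Let `Γ = G₁ *_A G₂` (the pushout of two injective maps `A →* Gᵢ`, `i : Bool`),
with `G₁, G₂` finitely generated, and let `N ◁ Γ` have finite index `n`. With
`a = [A : A ∩ N]` and `kⱼ = [Gⱼ : Gⱼ ∩ N]`, one has
`d(N) ≤ (n/k₁)·d(N ∩ G₁) + (n/k₂)·d(N ∩ G₂) + n/a − n/k₁ − n/k₂ + 1`. -/
theorem rank_bound_amalgamated_product {A : Type*} [Group A] {G : Bool → Type*}
    [∀ i, Group (G i)] [∀ i, Group.FG (G i)]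
    (φ : ∀ i, A →* G i) (hφ : ∀ i, Function.Injective (φ i))
    (N : Subgroup (Monoid.PushoutI φ)) (hNnorm : N.Normal) (hNfi : N.FiniteIndex)
    (n a k₁ k₂ : ℕ) (hn : N.index = n)
    (ha : (N.comap (Monoid.PushoutI.base φ)).index = a)
    (hk₁ : (N.comap (Monoid.PushoutI.of (φ := φ) true)).index = k₁)
    (hk₂ : (N.comap (Monoid.PushoutI.of (φ := φ) false)).index = k₂) :
    (d N : ℝ) ≤ ((n : ℝ) / k₁) * d (N.comap (Monoid.PushoutI.of (φ := φ) true)) +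
      ((n : ℝ) / k₂) * d (N.comap (Monoid.PushoutI.of (φ := φ) false)) +
      (n : ℝ) / a - (n : ℝ) / k₁ - (n : ℝ) / k₂ + 1 := by
  classical
  haveI := hNnorm
  haveI := hNfi
  have hNidx0 : N.index ≠ 0 := hNfi.index_ne_zero
  have hn0 : n ≠ 0 := by rw [← hn]; exact hNidx0
  have hk₁0 : k₁ ≠ 0 := by rw [← hk₁]; exact index_comap_ne_zero N hNidx0 _
  have hk₂0 : k₂ ≠ 0 := by rw [← hk₂]; exact index_comap_ne_zero N hNidx0 _
  have ha0 : a ≠ 0 := by rw [← ha]; exact index_comap_ne_zero N hNidx0 _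
  -- finitely generated comaps
  have hFG : ∀ i : Bool, Group.FG ↥(N.comap (Monoid.PushoutI.of (φ := φ) i)) := by
    intro i
    haveI : (N.comap (Monoid.PushoutI.of (φ := φ) i)).FiniteIndex :=
      ⟨index_comap_ne_zero N hNidx0 _⟩
    exact Subgroup.fg_of_index_ne_zero _
  have hSm : ∀ i : Bool, ∃ S : Finset ↥(N.comap (Monoid.PushoutI.of (φ := φ) i)),
      S.card = d ↥(N.comap (Monoid.PushoutI.of (φ := φ) i)) ∧
        Subgroup.closure (S : Set ↥(N.comap (Monoid.PushoutI.of (φ := φ) i))) = ⊤ :=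
    fun i => @d_spec _ _ (hFG i)
  choose Sm hSmcard hSmclos using hSm
  have hTclos : ∀ i, Subgroup.closure
      ((((Sm i).image Subtype.val : Finset (G i)) : Set (G i))) =
      N.comap (Monoid.PushoutI.of (φ := φ) i) := by
    intro i
    have hmap := MonoidHom.map_closure (N.comap (Monoid.PushoutI.of (φ := φ) i)).subtype
      ((Sm i : Set ↥(N.comap (Monoid.PushoutI.of (φ := φ) i))))
    rw [hSmclos i, ← MonoidHom.range_eq_map, Subgroup.subtype_range, Subgroup.coe_subtype]
      at hmap
    rw [Finset.coe_image]
    exact hmap.symm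
  have hTcard : ∀ i, ((Sm i).image Subtype.val).card ≤
      d ↥(N.comap (Monoid.PushoutI.of (φ := φ) i)) := by
    intro i
    rw [← hSmcard i]
    exact Finset.card_image_le
  have hmain := RB.main_count φ N (fun i => (Sm i).image Subtype.val) hTclos
  have hmain' : d ↥N ≤ Nat.card (RB.Vv φ N true) * ((Sm true).image Subtype.val).card
      + Nat.card (RB.Vv φ N false) * ((Sm false).image Subtype.val).card
      + (Nat.card (RB.Ee φ N) - (Nat.card (RB.W φ N) - 1)) := hmain
  have h1 : ((Sm true).image Subtype.val).card ≤
      d ↥(N.comap (Monoid.PushoutI.of (φ := φ) true)) := hTcard true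
  have h2 : ((Sm false).image Subtype.val).card ≤
      d ↥(N.comap (Monoid.PushoutI.of (φ := φ) false)) := hTcard false
  have hl1 : n = Nat.card (RB.Vv φ N true) * k₁ := by
    rw [← hn, ← hk₁]; exact RB.lagrange_V φ N true
  have hl2 : n = Nat.card (RB.Vv φ N false) * k₂ := by
    rw [← hn, ← hk₂]; exact RB.lagrange_V φ N false
  have hlE : n = Nat.card (RB.Ee φ N) * a := by
    rw [← hn, ← ha]; exact RB.lagrange_E φ N
  have hWE := RB.card_W_le φ N
  have hWeq := RB.card_W_eq φ N
  rw [hWeq] at hWE hmain'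
  set c1 := Nat.card (RB.Vv φ N true) with hc1def
  set c2 := Nat.card (RB.Vv φ N false) with hc2def
  set cE := Nat.card (RB.Ee φ N) with hcEdef
  set t1 := ((Sm true).image Subtype.val).card with ht1def
  set t2 := ((Sm false).image Subtype.val).card with ht2def
  set D1 := d ↥(N.comap (Monoid.PushoutI.of (φ := φ) true)) with hD1def
  set D2 := d ↥(N.comap (Monoid.PushoutI.of (φ := φ) false)) with hD2def
  have hc10 : c1 ≠ 0 := by intro h; rw [h, zero_mul] at hl1; exact hn0 hl1
  have hc20 : c2 ≠ 0 := by intro h; rw [h, zero_mul] at hl2; exact hn0 hl2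
  have hq1 : (n : ℝ) / (k₁ : ℝ) = (c1 : ℝ) := by
    rw [hl1]
    push_cast
    rw [mul_div_assoc, div_self (by exact_mod_cast hk₁0), mul_one]
  have hq2 : (n : ℝ) / (k₂ : ℝ) = (c2 : ℝ) := by
    rw [hl2]
    push_cast
    rw [mul_div_assoc, div_self (by exact_mod_cast hk₂0), mul_one]
  have hqE : (n : ℝ) / (a : ℝ) = (cE : ℝ) := by
    rw [hlE]
    push_cast
    rw [mul_div_assoc, div_self (by exact_mod_cast ha0), mul_one]
  rw [hq1, hq2, hqE]
  have hnat : d ↥N ≤ c1 * D1 + c2 * D2 + (cE - (c1 + c2 - 1)) := by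
    refine le_trans hmain' ?_
    exact Nat.add_le_add (Nat.add_le_add (Nat.mul_le_mul_left _ h1)
      (Nat.mul_le_mul_left _ h2)) le_rfl
  have hle : c1 + c2 - 1 ≤ cE := by omega
  have h1le : 1 ≤ c1 + c2 := by omega
  calc (d ↥N : ℝ) ≤ ((c1 * D1 + c2 * D2 + (cE - (c1 + c2 - 1)) : ℕ) : ℝ) :=
        Nat.cast_le.mpr hnat
    _ = (c1 : ℝ) * D1 + (c2 : ℝ) * D2 + ((cE : ℝ) - ((c1 : ℝ) + (c2 : ℝ) - 1)) := by
        rw [Nat.cast_add, Nat.cast_add, Nat.cast_sub hle, Nat.cast_sub h1le]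
        push_cast
        ring
    _ = (c1 : ℝ) * D1 + (c2 : ℝ) * D2 + (cE : ℝ) - (c1 : ℝ) - (c2 : ℝ) + 1 := by ring
end

section
/- Let Γ be the lamplighter group C₂ ≀ ℤ and let Γₙ be the kernel of the natural surjection Γ → C_{2ⁿ} (composing the projection Γ → ℤ with ℤ → ℤ/2ⁿℤ). Then Γₙ surjects onto C₂^{2ⁿ}, hence d(Γₙ) ≥ 2ⁿ, and therefore RG(Γ,(Γₙ)) = lim (d(Γₙ)-1)/[Γ:Γₙ] ≥ 1. -/
open Filter

/-- The shift action of `ℤ` on the base group `⊕_{i ∈ ℤ} C₂` of the lamplighter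
group, as a homomorphism into the automorphism group. -/
noncomputable def lampShift : Multiplicative ℤ →* MulAut (Multiplicative (ℤ →₀ ZMod 2)) where
  toFun z := AddEquiv.toMultiplicative (Finsupp.domCongr (Equiv.addRight z.toAdd))
  map_one' := by
    ext f i
    show Finsupp.equivMapDomain _ (Multiplicative.toAdd f) i = (Multiplicative.toAdd f) i
    simp [Finsupp.equivMapDomain_apply, Equiv.Perm.one_symm, Equiv.Perm.one_apply]
  map_mul' a b := by
    ext f i
    show Finsupp.equivMapDomain _ (Multiplicative.toAdd f) i =
      Finsupp.equivMapDomain _ (Finsupp.equivMapDomain _ (Multiplicative.toAdd f)) i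
    simp [Finsupp.equivMapDomain_apply, Equiv.Perm.mul_def, Equiv.addRight_symm, sub_sub,
      add_comm, add_assoc, add_left_comm]

/-- The lamplighter group `C₂ ≀ ℤ = (⊕_{i ∈ ℤ} C₂) ⋊ ℤ`. -/
abbrev Lamplighter : Type :=
  SemidirectProduct (Multiplicative (ℤ →₀ ZMod 2)) (Multiplicative ℤ) lampShift

/-- The natural surjection `C₂ ≀ ℤ → C_{2ⁿ}`, composing the projection to `ℤ`
with reduction mod `2ⁿ`. -/
noncomputable def lampQuot (n : ℕ) : Lamplighter →* Multiplicative (ZMod (2 ^ n)) :=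
  (AddMonoidHom.toMultiplicative (Int.castAddHom (ZMod (2 ^ n)))).comp
    SemidirectProduct.rightHom

-- residue sum homomorphism
noncomputable def resSum (n : ℕ) : (ℤ →₀ ZMod 2) →+ (ZMod (2 ^ n) → ZMod 2) :=
  (Finsupp.coeFnAddHom (ι := ZMod (2 ^ n)) (M := ZMod 2)).comp
    (Finsupp.mapDomain.addMonoidHom (fun j : ℤ => (j : ZMod (2 ^ n))))

lemma lampShift_toAdd (z : Multiplicative ℤ) (f : Multiplicative (ℤ →₀ ZMod 2)) :
    Multiplicative.toAdd (lampShift z f) =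
      Finsupp.equivMapDomain (Equiv.addRight z.toAdd) (Multiplicative.toAdd f) := rfl

lemma resSum_shift (n : ℕ) (z : ℤ) (hz : (z : ZMod (2 ^ n)) = 0) (f : ℤ →₀ ZMod 2) :
    resSum n (Finsupp.equivMapDomain (Equiv.addRight z) f) = resSum n f := by
  show ⇑(Finsupp.mapDomain _ (Finsupp.equivMapDomain (Equiv.addRight z) f)) = _
  rw [Finsupp.equivMapDomain_eq_mapDomain, ← Finsupp.mapDomain_comp]
  have hfun : ((fun j : ℤ => (j : ZMod (2 ^ n))) ∘ ⇑(Equiv.addRight z)) =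
      fun j : ℤ => (j : ZMod (2 ^ n)) := by
    funext j
    show ((j + z : ℤ) : ZMod (2 ^ n)) = (j : ZMod (2 ^ n))
    push_cast
    rw [hz, add_zero]
  rw [hfun]
  rfl

lemma mem_ker_iff (n : ℕ) (x : Lamplighter) :
    x ∈ (lampQuot n).ker ↔ ((Multiplicative.toAdd x.right : ℤ) : ZMod (2 ^ n)) = 0 := by
  rw [MonoidHom.mem_ker]
  constructor
  · intro h
    have := congrArg Multiplicative.toAdd h
    simpa [lampQuot] using this
  · intro h
    apply Multiplicative.toAdd.injective
    simpa [lampQuot] using h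

noncomputable def lampSurjZ (n : ℕ) : ((lampQuot n).ker) →* Multiplicative (ZMod (2 ^ n) → ZMod 2) where
  toFun g := Multiplicative.ofAdd (resSum n (Multiplicative.toAdd (g : Lamplighter).left))
  map_one' := by
    simp
  map_mul' g h := by
    apply Multiplicative.toAdd.injective
    show resSum n (Multiplicative.toAdd ((g : Lamplighter) * h).left) = _
    rw [SemidirectProduct.mul_left]
    show resSum n (Multiplicative.toAdd (g : Lamplighter).left +
      Multiplicative.toAdd (lampShift (g : Lamplighter).right (h : Lamplighter).left)) = _
    rw [map_add, lampShift_toAdd,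
      resSum_shift n _ ((mem_ker_iff n _).1 g.2)]
    rfl

lemma lampSurjZ_surjective (n : ℕ) : Function.Surjective (lampSurjZ n) := by
  intro t
  set g0 : ZMod (2 ^ n) →₀ ZMod 2 := Finsupp.equivFunOnFinite.symm (Multiplicative.toAdd t)
  have : NeZero (2 ^ n) := ⟨pow_ne_zero n two_ne_zero⟩
  set f : ℤ →₀ ZMod 2 := Finsupp.mapDomain (fun i : ZMod (2 ^ n) => (i.val : ℤ)) g0
  have hmem : SemidirectProduct.inl (Multiplicative.ofAdd f) ∈ (lampQuot n).ker := by
    rw [mem_ker_iff]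
    simp [SemidirectProduct.right_inl]
  refine ⟨⟨_, hmem⟩, ?_⟩
  apply Multiplicative.toAdd.injective
  show resSum n (Multiplicative.toAdd (Multiplicative.ofAdd f)) = Multiplicative.toAdd t
  show ⇑(Finsupp.mapDomain (fun j : ℤ => (j : ZMod (2 ^ n))) f) = _
  rw [← Finsupp.mapDomain_comp]
  have : ((fun j : ℤ => (j : ZMod (2 ^ n))) ∘ fun i : ZMod (2 ^ n) => (i.val : ℤ)) = id := by
    funext i
    show ((i.val : ℤ) : ZMod (2 ^ n)) = i
    push_cast
    exact ZMod.natCast_rightInverse i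
  rw [this, Finsupp.mapDomain_id]
  exact Finsupp.equivFunOnFinite.apply_symm_apply _

noncomputable def toFinHom (n : ℕ) :
    Multiplicative (ZMod (2 ^ n) → ZMod 2) →* Multiplicative (Fin (2 ^ n) → ZMod 2) where
  toFun t := Multiplicative.ofAdd (fun i : Fin (2 ^ n) =>
    Multiplicative.toAdd t (((i : ℕ) : ZMod (2 ^ n))))
  map_one' := rfl
  map_mul' _ _ := rfl

lemma toFinHom_surjective (n : ℕ) : Function.Surjective (toFinHom n) := by
  have : NeZero (2 ^ n) := ⟨pow_ne_zero n two_ne_zero⟩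
  intro t
  refine ⟨Multiplicative.ofAdd (fun z : ZMod (2 ^ n) =>
    Multiplicative.toAdd t ⟨z.val, z.val_lt⟩), ?_⟩
  apply Multiplicative.toAdd.injective
  funext i
  show Multiplicative.toAdd t ⟨(((i : ℕ) : ZMod (2 ^ n))).val, _⟩ = Multiplicative.toAdd t i
  simp [ZMod.val_cast_of_lt i.isLt]

noncomputable def lampSurj (n : ℕ) : ((lampQuot n).ker) →* Multiplicative (Fin (2 ^ n) → ZMod 2) :=
  (toFinHom n).comp (lampSurjZ n)

lemma lampSurj_surjective (n : ℕ) : Function.Surjective (lampSurj n) :=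
  (toFinHom_surjective n).comp (lampSurjZ_surjective n)

lemma lamp_gen : Subgroup.closure
    ({SemidirectProduct.inl (Multiplicative.ofAdd (Finsupp.single 0 1)),
      SemidirectProduct.inr (Multiplicative.ofAdd 1)} : Set Lamplighter) = ⊤ := by
  set a : Lamplighter := SemidirectProduct.inl (Multiplicative.ofAdd (Finsupp.single 0 1))
  set t : Lamplighter := SemidirectProduct.inr (Multiplicative.ofAdd 1)
  set H := Subgroup.closure ({a, t} : Set Lamplighter)
  have ha : a ∈ H := Subgroup.subset_closure (by simp)
  have ht : t ∈ H := Subgroup.subset_closure (by simp)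
  have hinr : ∀ z : ℤ, SemidirectProduct.inr (Multiplicative.ofAdd z) ∈ H := by
    intro z
    have : SemidirectProduct.inr (φ := lampShift) (Multiplicative.ofAdd z) = t ^ z := by
      rw [← map_zpow]
      congr 1
      apply Multiplicative.toAdd.injective
      simp
    rw [this]
    exact zpow_mem ht z
  have hsingle : ∀ i : ℤ, SemidirectProduct.inl (φ := lampShift)
      (Multiplicative.ofAdd (Finsupp.single i 1)) ∈ H := by
    intro i
    have key : lampShift (Multiplicative.ofAdd i) (Multiplicative.ofAdd (Finsupp.single 0 1)) =
        Multiplicative.ofAdd (Finsupp.single i 1) := by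
      apply Multiplicative.toAdd.injective
      show Finsupp.equivMapDomain (Equiv.addRight i) (Finsupp.single (0:ℤ) (1 : ZMod 2)) = _
      rw [Finsupp.equivMapDomain_single]
      simp
    have := SemidirectProduct.inl_aut (φ := lampShift) (Multiplicative.ofAdd i)
      (Multiplicative.ofAdd (Finsupp.single 0 1))
    rw [key] at this
    rw [this]
    exact mul_mem (mul_mem (hinr i) ha) (hinr (-i))
  have hinl : ∀ f : ℤ →₀ ZMod 2, SemidirectProduct.inl (φ := lampShift)
      (Multiplicative.ofAdd f) ∈ H := by
    intro f
    induction f using Finsupp.induction with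
    | zero => simpa using one_mem H
    | single_add i b g _ _ ih =>
      have hib : SemidirectProduct.inl (φ := lampShift)
          (Multiplicative.ofAdd (Finsupp.single i b)) ∈ H := by
        rcases (by decide : ∀ c : ZMod 2, c = 0 ∨ c = 1) b with hb | hb
        · subst hb; simpa using one_mem H
        · subst hb; exact hsingle i
      have : SemidirectProduct.inl (φ := lampShift)
          (Multiplicative.ofAdd (Finsupp.single i b + g)) =
          SemidirectProduct.inl (Multiplicative.ofAdd (Finsupp.single i b)) *
          SemidirectProduct.inl (Multiplicative.ofAdd g) := by
        rw [← map_mul]; rfl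
      rw [this]
      exact mul_mem hib ih
  rw [eq_top_iff]
  intro x _
  rw [← SemidirectProduct.inl_left_mul_inr_right x]
  exact mul_mem (hinl (Multiplicative.toAdd x.left))
    (hinr (Multiplicative.toAdd x.right))

instance : Group.FG Lamplighter := by
  rw [Group.fg_iff]
  exact ⟨_, lamp_gen, Set.toFinite _⟩

lemma lampQuot_surjective (n : ℕ) : Function.Surjective (lampQuot n) := by
  intro y
  obtain ⟨z, hz⟩ := ZMod.intCast_surjective (Multiplicative.toAdd y)
  refine ⟨SemidirectProduct.inr (Multiplicative.ofAdd z), ?_⟩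
  apply Multiplicative.toAdd.injective
  simpa [lampQuot] using hz

lemma index_eq (n : ℕ) : ((lampQuot n).ker).index = 2 ^ n := by
  rw [Subgroup.index_ker, MonoidHom.range_eq_top.2 (lampQuot_surjective n)]
  rw [Nat.card_congr Subgroup.topEquiv.toEquiv,
    Nat.card_congr Multiplicative.toAdd, Nat.card_zmod]

instance (n : ℕ) : ((lampQuot n).ker).FiniteIndex :=
  ⟨by rw [index_eq]; positivity⟩

lemma card_lower (m : ℕ) (T : Finset (Multiplicative (Fin m → ZMod 2)))
    (hT : Subgroup.closure (T : Set (Multiplicative (Fin m → ZMod 2))) = ⊤) : m ≤ T.card := by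
  haveI : Fact (Nat.Prime 2) := ⟨Nat.prime_two⟩
  classical
  set T' : Finset (Fin m → ZMod 2) := T.image Multiplicative.toAdd with hT'
  have hspan : Submodule.span (ZMod 2) (T' : Set (Fin m → ZMod 2)) = ⊤ := by
    rw [eq_top_iff]
    intro v _
    have hx : Multiplicative.ofAdd v ∈ Subgroup.closure (T : Set _) := by rw [hT]; trivial
    have key : ∀ x ∈ Subgroup.closure (T : Set (Multiplicative (Fin m → ZMod 2))),
        Multiplicative.toAdd x ∈ Submodule.span (ZMod 2) (T' : Set (Fin m → ZMod 2)) := by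
      intro x hxx
      induction hxx using Subgroup.closure_induction with
      | mem y hy =>
        exact Submodule.subset_span (Finset.mem_coe.2
          (Finset.mem_image_of_mem _ (Finset.mem_coe.1 hy)))
      | one => exact Submodule.zero_mem _
      | mul y z _ _ hy hz => exact Submodule.add_mem _ hy hz
      | inv y _ hy => exact Submodule.neg_mem _ hy
    simpa using key _ hx
  have h1 : (T' : Set (Fin m → ZMod 2)).finrank (ZMod 2) ≤ T'.card :=
    finrank_span_finset_le_card T'
  rw [Set.finrank, hspan, finrank_top] at h1
  calc m = Module.finrank (ZMod 2) (Fin m → ZMod 2) := (Module.finrank_fin_fun (ZMod 2)).symm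
    _ ≤ T'.card := h1
    _ ≤ T.card := Finset.card_image_le

lemma d_lower {G : Type*} [Group G] (m : ℕ) (f : G →* Multiplicative (Fin m → ZMod 2))
    (hf : Function.Surjective f) (hfg : Group.FG G) : m ≤ d G := by
  classical
  apply le_csInf
  · obtain ⟨s, hs, hfin⟩ := Group.fg_iff.mp hfg
    exact ⟨hfin.toFinset.card, hfin.toFinset, rfl, by rwa [Set.Finite.coe_toFinset]⟩
  · rintro k ⟨S, hcard, hgen⟩
    have hmap : Subgroup.map f ⊤ = ⊤ := by
      rw [← MonoidHom.range_eq_map, MonoidHom.range_eq_top.2 hf]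
    rw [← hgen, MonoidHom.map_closure, ← Finset.coe_image] at hmap
    calc m ≤ (S.image f).card := card_lower m _ hmap
      _ ≤ S.card := Finset.card_image_le
      _ = k := hcard


/-- For the lamplighter group `Γ = C₂ ≀ ℤ` and the chain `Γₙ = ker(Γ → C_{2ⁿ})`,
each `Γₙ` surjects onto `C₂^{2ⁿ}`, hence `d(Γₙ) ≥ 2ⁿ`, and the rank gradient of the
chain is at least `1`. -/
theorem lamplighter_rank_gradient
    (Γc : ℕ → Subgroup Lamplighter) (hΓc : ∀ n, Γc n = (lampQuot n).ker) :
    (∀ n, ∃ f : (Γc n) →* Multiplicative (Fin (2 ^ n) → ZMod 2), Function.Surjective f) ∧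
    (∀ n, 2 ^ n ≤ d (Γc n)) ∧
    (∀ L : ℝ, Tendsto (fun n => ((d (Γc n) : ℝ) - 1) / (Γc n).index) atTop (nhds L) →
      1 ≤ L) := by
  have hsurj : ∀ n, ∃ f : (Γc n) →* Multiplicative (Fin (2 ^ n) → ZMod 2),
      Function.Surjective f := by
    intro n
    rw [hΓc n]
    exact ⟨lampSurj n, lampSurj_surjective n⟩
  have hd : ∀ n, 2 ^ n ≤ d (Γc n) := by
    intro n
    obtain ⟨f, hf⟩ := hsurj n
    have hfg : Group.FG (Γc n) := by rw [hΓc n]; infer_instance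
    exact d_lower _ f hf hfg
  refine ⟨hsurj, hd, ?_⟩
  intro L hL
  have hb : Tendsto (fun n : ℕ => ((2 : ℝ) ^ n - 1) / (2 : ℝ) ^ n) atTop (nhds 1) := by
    have h2 : Tendsto (fun n : ℕ => ((1 : ℝ) / 2) ^ n) atTop (nhds 0) :=
      tendsto_pow_atTop_nhds_zero_of_lt_one (by norm_num) (by norm_num)
    have := Tendsto.sub (tendsto_const_nhds :
      Tendsto (fun _ : ℕ => (1 : ℝ)) atTop (nhds 1)) h2
    rw [sub_zero] at this
    convert this using 2 with n
    rw [one_div, inv_pow, sub_div, div_self (by positivity)]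
    ring
  refine le_of_tendsto_of_tendsto' hb hL ?_
  intro n
  have hi : (((Γc n).index : ℝ)) = 2 ^ n := by
    rw [hΓc n, index_eq]; push_cast; ring
  rw [hi, div_le_div_iff_of_pos_right (by positivity)]
  have : ((2 : ℝ) ^ n) ≤ (d (Γc n) : ℝ) := by exact_mod_cast hd n
  linarith
end

section
/- Let Γ be an infinite group that is boundedly generated, i.e., Γ = ⟨g₁⟩·⟨g₂⟩···⟨g_t⟩ for some g₁,…,g_t ∈ Γ, and let (Γᵢ) be a normal chain in Γ with trivial intersection. Let Kᵢ = Γᵢ'Γᵢ² and Hᵢ = Γ/Kᵢ, and let rᵢ = dim_{𝔽₂}(Γᵢ/Kᵢ). Then rᵢ ≤ t + (t-1)·log₂[Γ : Γᵢ]. -/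
open scoped commutatorElement in
/-- `G'G²`: the (normal) subgroup of `G` generated by all commutators and squares,
so that `G / G'G²` is the largest elementary abelian 2-quotient of `G`. -/
def sqComm (G : Type*) [Group G] : Subgroup G :=
  Subgroup.normalClosure {x : G | (∃ a b : G, x = ⁅a, b⁆) ∨ ∃ a : G, x = a * a}

instance sqComm_normal (G : Type*) [Group G] : (sqComm G).Normal :=
  Subgroup.normalClosure_normal

section Aux
variable {Γ : Type*} [Group Γ]
open scoped commutatorElement

/-- commutators and squares of elements of `N`, as a subset of the ambient group. -/
def Sset (N : Subgroup Γ) : Set Γ :=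
  {x | (∃ a b : Γ, a ∈ N ∧ b ∈ N ∧ x = ⁅a, b⁆) ∨ ∃ a : Γ, a ∈ N ∧ x = a * a}

lemma Sset_subset (N : Subgroup Γ) : Sset N ⊆ (N : Set Γ) := by
  rintro x (⟨a, b, ha, hb, rfl⟩ | ⟨a, ha, rfl⟩)
  · simp only [commutatorElement_def]
    exact N.mul_mem (N.mul_mem (N.mul_mem ha hb) (N.inv_mem ha)) (N.inv_mem hb)
  · exact N.mul_mem ha ha

lemma conj_mem_Sset {N : Subgroup Γ} [hN : N.Normal] {x : Γ} (hx : x ∈ Sset N) (c : Γ) :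
    c * x * c⁻¹ ∈ Sset N := by
  rcases hx with ⟨a, b, ha, hb, rfl⟩ | ⟨a, ha, rfl⟩
  · exact Or.inl ⟨c * a * c⁻¹, c * b * c⁻¹, hN.conj_mem a ha c, hN.conj_mem b hb c, by
      simp only [commutatorElement_def]; group⟩
  · exact Or.inr ⟨c * a * c⁻¹, hN.conj_mem a ha c, by group⟩

lemma closure_Sset_normal (N : Subgroup Γ) [N.Normal] : (Subgroup.closure (Sset N)).Normal := by
  constructor
  intro x hx c
  induction hx using Subgroup.closure_induction with
  | mem y hy => exact Subgroup.subset_closure (conj_mem_Sset hy c)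
  | one => simpa using Subgroup.one_mem _
  | mul y z _ _ hy hz =>
      have : c * (y * z) * c⁻¹ = (c * y * c⁻¹) * (c * z * c⁻¹) := by group
      rw [this]; exact Subgroup.mul_mem _ hy hz
  | inv y _ hy =>
      have : c * y⁻¹ * c⁻¹ = (c * y * c⁻¹)⁻¹ := by group
      rw [this]; exact Subgroup.inv_mem _ hy

lemma closure_Sset_eq_map (N : Subgroup Γ) [N.Normal] :
    Subgroup.closure (Sset N) = (sqComm N).map N.subtype := by
  apply le_antisymm
  · apply (Subgroup.closure_le _).2
    rintro x (⟨a, b, ha, hb, rfl⟩ | ⟨a, ha, rfl⟩)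
    · exact ⟨⁅(⟨a, ha⟩ : N), (⟨b, hb⟩ : N)⁆,
        Subgroup.subset_normalClosure (Or.inl ⟨_, _, rfl⟩), by
          simp [commutatorElement_def]⟩
    · exact ⟨(⟨a, ha⟩ : N) * ⟨a, ha⟩,
        Subgroup.subset_normalClosure (Or.inr ⟨_, rfl⟩), rfl⟩
  · rw [Subgroup.map_le_iff_le_comap]
    haveI : ((Subgroup.closure (Sset N)).comap N.subtype).Normal :=
      (closure_Sset_normal N).comap _
    apply Subgroup.normalClosure_le_normal
    rintro x (⟨a, b, rfl⟩ | ⟨a, rfl⟩)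
    · rw [SetLike.mem_coe, Subgroup.mem_comap]
      exact Subgroup.subset_closure (Or.inl ⟨↑a, ↑b, a.2, b.2, by simp [commutatorElement_def]⟩)
    · rw [SetLike.mem_coe, Subgroup.mem_comap]
      exact Subgroup.subset_closure (Or.inr ⟨↑a, a.2, rfl⟩)

lemma zpow_eq_pow_val {G : Type*} [Group G] {m : ℕ} [NeZero m] {h : G} (hh : h ^ m = 1) (z : ℤ) :
    h ^ z = h ^ ((z : ZMod m).val) := by
  have h0 : ((z - ((z : ZMod m).val : ℤ) : ℤ) : ZMod m) = 0 := by
    push_cast [ZMod.natCast_val, ZMod.cast_id]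
    ring
  obtain ⟨k, hk⟩ := (ZMod.intCast_zmod_eq_zero_iff_dvd _ _).1 h0
  have hz : z = ((z : ZMod m).val : ℤ) + m * k := by linarith
  conv_lhs => rw [hz]
  rw [zpow_add, zpow_natCast, zpow_mul, zpow_natCast, hh, one_zpow, mul_one]

end Aux

/-- Let `Γ` be an infinite boundedly generated group, `Γ = ⟨g₁⟩⋯⟨g_t⟩`, and `(Γᵢ)` a
normal chain with trivial intersection. If `Γᵢ/Γᵢ'Γᵢ²` is elementary abelian of rank
`rᵢ`, then `rᵢ ≤ t + (t-1)·log₂ [Γ : Γᵢ]`. -/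
theorem bounded_generation_rank_bound {Γ : Type*} [Group Γ] [Infinite Γ]
    (t : ℕ) (g : Fin t → Γ)
    (hbg : ∀ x : Γ, ∃ a : Fin t → ℤ, x = (List.ofFn fun i => g i ^ a i).prod)
    (Γc : ℕ → Subgroup Γ) (hnorm : ∀ i, (Γc i).Normal)
    (hchain : ∀ i, Γc (i + 1) ≤ Γc i) (hfi : ∀ i, (Γc i).FiniteIndex)
    (hint : (⨅ i, Γc i) = ⊥)
    (r : ℕ → ℕ)
    (hr : ∀ i, Nonempty
      (((Γc i) ⧸ sqComm (Γc i)) ≃* Multiplicative (Fin (r i) → ZMod 2))) :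
    ∀ i, (r i : ℝ) ≤ t + ((t : ℝ) - 1) * Real.logb 2 ((Γc i).index) := by
  intro i
  classical
  set N := Γc i with hNdef
  haveI := hnorm i
  haveI := hfi i
  set n := N.index with hn
  have hn0 : n ≠ 0 := Subgroup.FiniteIndex.index_ne_zero
  set K := Subgroup.closure (Sset N) with hKdef
  haveI hKnorm : K.Normal := closure_Sset_normal N
  have hKN : K ≤ N := (Subgroup.closure_le N).2 (Sset_subset N)
  set m := 2 * n with hm
  haveI : NeZero m := ⟨by omega⟩
  -- every element of `Γ ⧸ K` has order dividing `m = 2n`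
  have hexp : ∀ y : Γ, ((y : Γ ⧸ K)) ^ m = 1 := by
    intro y
    have h1 : y ^ n ∈ N := Subgroup.pow_index_mem N y
    have h2 : y ^ n * y ^ n ∈ K := Subgroup.subset_closure (Or.inr ⟨y ^ n, h1, rfl⟩)
    have hy : ((y ^ m : Γ) : Γ ⧸ K) = 1 := by
      rw [QuotientGroup.eq_one_iff, hm, two_mul, pow_add]; exact h2
    simpa using hy
  -- a surjection from `(ZMod m)^t` onto `Γ ⧸ K`
  have hsurj : Function.Surjective (fun a : Fin t → ZMod m =>
      (List.ofFn fun j => ((g j : Γ ⧸ K)) ^ (a j).val).prod) := by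
    intro q
    obtain ⟨y, rfl⟩ := QuotientGroup.mk_surjective q
    obtain ⟨a, ha⟩ := hbg y
    refine ⟨fun j => ((a j : ZMod m)), ?_⟩
    have key : (QuotientGroup.mk' K) ((List.ofFn fun j => g j ^ a j).prod)
        = (List.ofFn fun j => ((QuotientGroup.mk' K) (g j)) ^ (a j)).prod := by
      rw [map_list_prod, List.map_ofFn]
      simp [Function.comp_def]
    show (List.ofFn fun j => ((g j : Γ ⧸ K)) ^ ((a j : ZMod m)).val).prod = (y : Γ ⧸ K)
    have key2 : ∀ j, ((g j : Γ ⧸ K)) ^ ((a j : ZMod m)).val = ((g j : Γ ⧸ K)) ^ (a j) :=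
      fun j => (zpow_eq_pow_val (hexp (g j)) (a j)).symm
    calc (List.ofFn fun j => ((g j : Γ ⧸ K)) ^ ((a j : ZMod m)).val).prod
        = (List.ofFn fun j => ((g j : Γ ⧸ K)) ^ (a j)).prod := by
          congr 1; exact congrArg List.ofFn (funext key2)
      _ = (y : Γ ⧸ K) := by rw [ha]; exact key.symm
  haveI : Finite (Γ ⧸ K) := Finite.of_surjective _ hsurj
  have hcard1 : Nat.card (Γ ⧸ K) ≤ m ^ t := by
    refine le_trans (Nat.card_le_card_of_surjective _ hsurj) ?_
    simp [Nat.card_pi]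
  -- the index of `K`
  have hsub : K.subgroupOf N = sqComm N := by
    rw [Subgroup.subgroupOf, hKdef, closure_Sset_eq_map,
      Subgroup.comap_map_eq_self_of_injective N.subtype_injective]
  have hq : Nat.card (↥N ⧸ sqComm N) = 2 ^ r i := by
    obtain ⟨e⟩ := hr i
    rw [Nat.card_congr e.toEquiv]
    simp [Nat.card_pi]
  have hKi : K.index = 2 ^ r i * n := by
    rw [← Subgroup.relIndex_mul_index hKN]
    congr 1
    rw [Subgroup.relIndex, hsub, Subgroup.index_eq_card, hq]
  have hmain : 2 ^ r i * n ≤ m ^ t := by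
    rw [← hKi, Subgroup.index_eq_card]
    exact hcard1
  -- pass to real logarithms
  have hn1 : 1 ≤ n := Nat.one_le_iff_ne_zero.2 hn0
  have hreal : (2 : ℝ) ^ r i * (n : ℝ) ≤ ((2 : ℝ) * n) ^ t := by
    have := hmain
    rw [hm] at this
    exact_mod_cast this
  have hL : (0 : ℝ) ≤ Real.logb 2 n :=
    Real.logb_nonneg (by norm_num) (by exact_mod_cast hn1)
  have hx : (0 : ℝ) < (2 : ℝ) ^ r i * n := by
    have : (0 : ℝ) < n := by exact_mod_cast Nat.pos_of_ne_zero hn0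
    positivity
  have hy : (0 : ℝ) < ((2 : ℝ) * n) ^ t := by
    have : (0 : ℝ) < n := by exact_mod_cast Nat.pos_of_ne_zero hn0
    positivity
  have hlog := (Real.logb_le_logb (b := 2) (by norm_num) hx hy).2 hreal
  have hnne : (n : ℝ) ≠ 0 := by exact_mod_cast hn0
  rw [Real.logb_mul (by positivity) hnne, Real.logb_pow, Real.logb_pow,
    Real.logb_mul (by norm_num) hnne] at hlog
  rw [Real.logb_self_eq_one (by norm_num : (1:ℝ) < 2)] at hlog
  linarith
end
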